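/- arXiv:math/0503096 — 2 statements merged into one kernel-verified Lean document; each statement's English description precedes it below -/
import Mathlib

section
/- Let K₁, …, Kₙ be star bodies in ℝⁿ and let r be an integer with 1 ≤ r ≤ n. Then Ṽ(K₁,…,Kₙ)^r ≤ ∏_{j=1}^{r} Ṽ(K_j,…,K_j, K_{r+1},…,Kₙ), where in the j-th factor K_j occupies the first r argument slots. Equality holds if and only if K₁, …, K_r are all dilations of each other. -/
open MeasureTheory Metric Finset
open scoped NNReal ENNReal

noncomputable section

/-- The unit sphere `S^{n-1}` in `ℝⁿ`. -/
def unitSphere (n : ℕ) : Set (EuclideanSpace ℝ (Fin n)) :=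
  Metric.sphere 0 1

/-- A star body, described by its radial function: a continuous, strictly
positive function on the unit sphere. -/
def IsStarBody (n : ℕ) (ρ : EuclideanSpace ℝ (Fin n) → ℝ) : Prop :=
  ContinuousOn ρ (unitSphere n) ∧ ∀ u ∈ unitSphere n, 0 < ρ u

/-- `ρL` is a dilate of `ρK`: the radial functions are positive multiples of
each other on the unit sphere. -/
def Dilates (n : ℕ) (ρK ρL : EuclideanSpace ℝ (Fin n) → ℝ) : Prop :=
  ∃ lam : ℝ, 0 < lam ∧ ∀ u ∈ unitSphere n, ρL u = lam * ρK u

/-- The dual quermassintegral `W̃_i(K) = (1/n) ∫_{S^{n-1}} ρ_K(u)^{n-i} dS(u)`,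
the integral taken with respect to `(n-1)`-dimensional Hausdorff measure. -/
def dualQuer (n i : ℕ) (ρ : EuclideanSpace ℝ (Fin n) → ℝ) : ℝ :=
  (1 / n) * ∫ u in unitSphere n, (ρ u) ^ (n - i) ∂ μH[(n : ℝ) - 1]

/-- The radial function of the mixed intersection body `I(K₁, …, K_{n-1})`:
`ρ(I(K₁,…,K_{n-1}), u) = (1/(n-1)) ∫_{S^{n-1} ∩ u^⊥} ρ_{K₁}(w)⋯ρ_{K_{n-1}}(w) dw`,
the integral taken with respect to `(n-2)`-dimensional Hausdorff measure. -/
def mixedIntRadial (n : ℕ) (ρs : Fin (n - 1) → EuclideanSpace ℝ (Fin n) → ℝ) :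
    EuclideanSpace ℝ (Fin n) → ℝ :=
  fun u => (1 / ((n : ℝ) - 1)) *
    ∫ w in unitSphere n ∩ {w | inner ℝ u w = (0 : ℝ)}, (∏ k, ρs k w) ∂ μH[(n : ℝ) - 2]

/-- The dual mixed volume
`Ṽ(K₁,…,Kₙ) = (1/n) ∫_{S^{n-1}} ρ_{K₁}(u)⋯ρ_{Kₙ}(u) dS(u)`. -/
def dualMixedVol (n : ℕ) (K : Fin n → EuclideanSpace ℝ (Fin n) → ℝ) : ℝ :=
  (1 / n) * ∫ u in unitSphere n, (∏ k, K k u) ∂ μH[(n : ℝ) - 1]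

section Charts
variable {m : ℕ}

/-- Chart for the sphere: graph over the hyperplane `x i = 0`. -/
def sphChart (m : ℕ) (i : Fin (m+1)) (ε : ℝ) (x : EuclideanSpace ℝ (Fin m)) :
    EuclideanSpace ℝ (Fin (m+1)) :=
  WithLp.toLp 2 (i.insertNth (ε * Real.sqrt (1 - ‖x‖ ^ 2)) x.ofLp)

/-- Projection deleting the `i`-th coordinate. -/
def sphProj (m : ℕ) (i : Fin (m+1)) (u : EuclideanSpace ℝ (Fin (m+1))) :
    EuclideanSpace ℝ (Fin m) :=
  WithLp.toLp 2 (fun j => u (i.succAbove j))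

lemma sphChart_apply_same (i : Fin (m+1)) (ε : ℝ) (x : EuclideanSpace ℝ (Fin m)) :
    sphChart m i ε x i = ε * Real.sqrt (1 - ‖x‖ ^ 2) := by
  simp [sphChart]

lemma sphChart_apply_succAbove (i : Fin (m+1)) (ε : ℝ) (x : EuclideanSpace ℝ (Fin m))
    (j : Fin m) : sphChart m i ε x (i.succAbove j) = x j := by
  simp [sphChart]

lemma euclid_sum_sq {k : ℕ} (x : EuclideanSpace ℝ (Fin k)) : ∑ j, x j ^ 2 = ‖x‖ ^ 2 := by
  rw [EuclideanSpace.norm_eq, Real.sq_sqrt (by positivity)]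
  simp [Real.norm_eq_abs, sq_abs]

lemma sum_sq_of_mem_sphere {u : EuclideanSpace ℝ (Fin (m+1))} (hu : u ∈ unitSphere (m+1)) :
    ∑ j, u j ^ 2 = 1 := by
  have : ‖u‖ = 1 := by simpa [unitSphere] using hu
  rw [euclid_sum_sq, this, one_pow]

lemma sphChart_mem_sphere (i : Fin (m+1)) {ε : ℝ} (hε : ε = 1 ∨ ε = -1)
    {x : EuclideanSpace ℝ (Fin m)} (hx : ‖x‖ ≤ 1) :
    sphChart m i ε x ∈ unitSphere (m+1) := by
  have h1 : (0:ℝ) ≤ 1 - ‖x‖ ^ 2 := by nlinarith [norm_nonneg x]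
  have : ∑ j, (sphChart m i ε x j) ^ 2 = 1 := by
    rw [Fin.sum_univ_succAbove _ i, sphChart_apply_same]
    have : ∀ j, sphChart m i ε x (i.succAbove j) = x j := sphChart_apply_succAbove i ε x
    simp_rw [this]
    rw [euclid_sum_sq, mul_pow, Real.sq_sqrt h1]
    rcases hε with h | h <;> rw [h] <;> ring
  have hn : ‖sphChart m i ε x‖ ^ 2 = 1 := by rw [← euclid_sum_sq, this]
  have : ‖sphChart m i ε x‖ = 1 := by nlinarith [norm_nonneg (sphChart m i ε x)]
  simpa [unitSphere] using this

lemma sphProj_sphChart (i : Fin (m+1)) (ε : ℝ) (x : EuclideanSpace ℝ (Fin m)) :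
    sphProj m i (sphChart m i ε x) = x := by
  ext j; exact sphChart_apply_succAbove i ε x j

lemma norm_sphProj_sq {u : EuclideanSpace ℝ (Fin (m+1))} (hu : u ∈ unitSphere (m+1))
    (i : Fin (m+1)) : ‖sphProj m i u‖ ^ 2 = 1 - u i ^ 2 := by
  have := sum_sq_of_mem_sphere hu
  rw [Fin.sum_univ_succAbove _ i] at this
  have h2 : ∑ j, (sphProj m i u) j ^ 2 = ‖sphProj m i u‖ ^ 2 := euclid_sum_sq _
  have h3 : ∀ j, (sphProj m i u) j = u (i.succAbove j) := fun j => rfl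
  simp_rw [h3] at h2
  linarith

lemma sphChart_sphProj {u : EuclideanSpace ℝ (Fin (m+1))} (hu : u ∈ unitSphere (m+1))
    {i : Fin (m+1)} {ε : ℝ} (hε : ε * |u i| = u i) (hε2 : ε = 1 ∨ ε = -1) :
    sphChart m i ε (sphProj m i u) = u := by
  ext j'
  rcases eq_or_ne j' i with rfl | hne
  · rw [sphChart_apply_same]
    have h : (1 : ℝ) - ‖sphProj m j' u‖ ^ 2 = u j' ^ 2 := by
      rw [norm_sphProj_sq hu j']; ring
    rw [h, Real.sqrt_sq_eq_abs, hε]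
  · obtain ⟨j, rfl⟩ := Fin.exists_succAbove_eq hne
    rw [sphChart_apply_succAbove]; rfl
lemma abs_sqrt_sub_sqrt_le {a b c : ℝ} (hc : 0 < c) (ha : c ≤ a) (hb : c ≤ b) :
    |Real.sqrt a - Real.sqrt b| ≤ |a - b| / (2 * Real.sqrt c) := by
  have hsc : 0 < Real.sqrt c := Real.sqrt_pos.mpr hc
  have hsa : Real.sqrt c ≤ Real.sqrt a := Real.sqrt_le_sqrt ha
  have hsb : Real.sqrt c ≤ Real.sqrt b := Real.sqrt_le_sqrt hb
  have key : (Real.sqrt a - Real.sqrt b) * (Real.sqrt a + Real.sqrt b) = a - b := by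
    have h1 : Real.sqrt a ^ 2 = a := Real.sq_sqrt (hc.le.trans ha)
    have h2 : Real.sqrt b ^ 2 = b := Real.sq_sqrt (hc.le.trans hb)
    nlinarith
  have hsum : 2 * Real.sqrt c ≤ Real.sqrt a + Real.sqrt b := by linarith
  have h2 : |Real.sqrt a - Real.sqrt b| * (2 * Real.sqrt c) ≤
      |Real.sqrt a - Real.sqrt b| * (Real.sqrt a + Real.sqrt b) := by
    apply mul_le_mul_of_nonneg_left hsum (abs_nonneg _)
  have h3 : |Real.sqrt a - Real.sqrt b| * (Real.sqrt a + Real.sqrt b) = |a - b| := by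
    rw [← key, abs_mul, abs_of_nonneg (show (0:ℝ) ≤ Real.sqrt a + Real.sqrt b by positivity)]
  rw [le_div_iff₀ (by positivity)]
  linarith

lemma dist_sq_split (i : Fin (m+1)) (u v : EuclideanSpace ℝ (Fin (m+1))) :
    dist u v ^ 2 = (u i - v i) ^ 2 +
      dist (sphProj m i u) (sphProj m i v) ^ 2 := by
  rw [EuclideanSpace.dist_eq, EuclideanSpace.dist_eq,
    Real.sq_sqrt (by positivity), Real.sq_sqrt (by positivity),
    Fin.sum_univ_succAbove (fun j => dist (u j) (v j) ^ 2) i, Real.dist_eq, sq_abs]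
  rfl

lemma lipschitzWith_sphProj (i : Fin (m+1)) : LipschitzWith 1 (sphProj m i) := by
  apply LipschitzWith.of_dist_le_mul
  intro u v
  have h := dist_sq_split i u v
  have h1 : dist (sphProj m i u) (sphProj m i v) ^ 2 ≤ dist u v ^ 2 := by nlinarith
  have h2 := Real.sqrt_le_sqrt h1
  rw [Real.sqrt_sq dist_nonneg, Real.sqrt_sq dist_nonneg] at h2
  simpa using h2

/-- radius of chart domain -/
def chartR (m : ℕ) : ℝ := Real.sqrt (1 - 1/(m+1))

lemma chartR_lt_one : chartR m < 1 := by
  rw [chartR]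
  have : (1:ℝ) - 1/(m+1) < 1 := by
    have : (0:ℝ) < 1/(m+1) := by positivity
    linarith
  calc Real.sqrt (1 - 1/(m+1)) < Real.sqrt 1 := by
        apply Real.sqrt_lt_sqrt ?_ this
        have : (0:ℝ) < (m:ℝ)+1 := by positivity
        rw [sub_nonneg, div_le_one this]; linarith
    _ = 1 := Real.sqrt_one

lemma one_sub_norm_sq_ge {x : EuclideanSpace ℝ (Fin m)} (hx : x ∈ closedBall 0 (chartR m)) :
    1/((m:ℝ)+1) ≤ 1 - ‖x‖ ^ 2 := by
  simp only [mem_closedBall, dist_zero_right] at hx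
  have h0 : (0:ℝ) ≤ 1 - 1/(m+1) := by
    have : (0:ℝ) < (m:ℝ)+1 := by positivity
    rw [sub_nonneg, div_le_one this]; linarith
  have : ‖x‖ ^ 2 ≤ chartR m ^ 2 := by
    apply pow_le_pow_left₀ (norm_nonneg _) hx
  rw [chartR, Real.sq_sqrt h0] at this
  linarith

lemma gdiff_bound {x y : EuclideanSpace ℝ (Fin m)}
    (hx : x ∈ closedBall 0 (chartR m)) (hy : y ∈ closedBall 0 (chartR m)) :
    |Real.sqrt (1 - ‖x‖^2) - Real.sqrt (1 - ‖y‖^2)| ≤ Real.sqrt (m+1) * dist x y := by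
  have hc : (0:ℝ) < 1/((m:ℝ)+1) := by positivity
  have h1 := abs_sqrt_sub_sqrt_le hc (one_sub_norm_sq_ge hx) (one_sub_norm_sq_ge hy)
  have hxn : ‖x‖ ≤ 1 := le_trans (by simpa [dist_zero_right] using hx) (chartR_lt_one).le
  have hyn : ‖y‖ ≤ 1 := le_trans (by simpa [dist_zero_right] using hy) (chartR_lt_one).le
  have h2 : |(1 - ‖x‖^2) - (1 - ‖y‖^2)| ≤ 2 * dist x y := by
    have : |(1 - ‖x‖^2) - (1 - ‖y‖^2)| = |‖y‖ - ‖x‖| * (‖y‖ + ‖x‖) := by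
      rw [← abs_of_nonneg (show (0:ℝ) ≤ ‖y‖ + ‖x‖ by positivity), ← abs_mul]
      ring_nf
    rw [this]
    have hd : |‖y‖ - ‖x‖| ≤ dist x y := by
      rw [dist_comm, ← dist_zero_right, ← dist_zero_right]
      exact abs_dist_sub_le y x 0
    calc |‖y‖ - ‖x‖| * (‖y‖ + ‖x‖) ≤ dist x y * 2 := by
          apply mul_le_mul hd (by linarith) (by positivity) dist_nonneg
      _ = 2 * dist x y := by ring
  have h3 : Real.sqrt (1/((m:ℝ)+1)) = 1 / Real.sqrt (m+1) := by
    rw [one_div, Real.sqrt_inv, one_div]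
  rw [h3] at h1
  have hs : (0:ℝ) < Real.sqrt (m+1) := Real.sqrt_pos.mpr (by positivity)
  calc |Real.sqrt (1 - ‖x‖^2) - Real.sqrt (1 - ‖y‖^2)|
      ≤ |(1 - ‖x‖^2) - (1 - ‖y‖^2)| / (2 * (1 / Real.sqrt (m+1))) := h1
    _ ≤ (2 * dist x y) / (2 * (1 / Real.sqrt (m+1))) := by gcongr
    _ = Real.sqrt (m+1) * dist x y := by field_simp


lemma lipschitzOnWith_sphChart (i : Fin (m+1)) {ε : ℝ} (hε : ε = 1 ∨ ε = -1) :
    LipschitzOnWith (NNReal.sqrt (m+2)) (sphChart m i ε) (closedBall 0 (chartR m)) := by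
  apply LipschitzOnWith.of_dist_le_mul
  intro x hx y hy
  have hcoe : ((NNReal.sqrt (m+2) : ℝ≥0) : ℝ) = Real.sqrt ((m:ℝ)+2) := by
    rw [Real.coe_sqrt]; norm_num
  have hsplit := dist_sq_split i (sphChart m i ε x) (sphChart m i ε y)
  rw [sphProj_sphChart, sphProj_sphChart, sphChart_apply_same, sphChart_apply_same] at hsplit
  have hg := gdiff_bound hx hy
  have hε2 : ε ^ 2 = 1 := by rcases hε with h | h <;> rw [h] <;> ring
  have h1 : (ε * Real.sqrt (1 - ‖x‖^2) - ε * Real.sqrt (1 - ‖y‖^2)) ^ 2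
      = (Real.sqrt (1 - ‖x‖^2) - Real.sqrt (1 - ‖y‖^2)) ^ 2 := by
    have : (ε * Real.sqrt (1 - ‖x‖^2) - ε * Real.sqrt (1 - ‖y‖^2)) ^ 2
        = ε ^ 2 * (Real.sqrt (1 - ‖x‖^2) - Real.sqrt (1 - ‖y‖^2)) ^ 2 := by ring
    rw [this, hε2, one_mul]
  have h2 : (Real.sqrt (1 - ‖x‖^2) - Real.sqrt (1 - ‖y‖^2)) ^ 2
      ≤ ((m:ℝ)+1) * dist x y ^ 2 := by
    have ha := abs_nonneg (Real.sqrt (1 - ‖x‖^2) - Real.sqrt (1 - ‖y‖^2))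
    have hb : Real.sqrt ((m:ℝ)+1) ^ 2 = (m:ℝ)+1 := Real.sq_sqrt (by positivity)
    nlinarith [sq_abs (Real.sqrt (1 - ‖x‖^2) - Real.sqrt (1 - ‖y‖^2)), dist_nonneg (x := x) (y := y), Real.sqrt_nonneg ((m:ℝ)+1)]
  have h3 : dist (sphChart m i ε x) (sphChart m i ε y) ^ 2 ≤ ((m:ℝ)+2) * dist x y ^ 2 := by
    rw [hsplit, h1]; nlinarith
  have h4 : Real.sqrt (((m:ℝ)+2) * dist x y ^ 2) = Real.sqrt ((m:ℝ)+2) * dist x y := by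
    rw [Real.sqrt_mul (by positivity), Real.sqrt_sq dist_nonneg]
  have h5 := Real.sqrt_le_sqrt h3
  rw [Real.sqrt_sq dist_nonneg, h4] at h5
  rw [hcoe]
  exact h5

lemma continuous_sphChart (i : Fin (m+1)) (ε : ℝ) : Continuous (sphChart m i ε) := by
  have hg : Continuous fun (x : EuclideanSpace ℝ (Fin m)) => ε * Real.sqrt (1 - ‖x‖ ^ 2) := by
    apply Continuous.mul continuous_const
    exact Real.continuous_sqrt.comp (continuous_const.sub ((continuous_norm).pow 2))
  have : Continuous fun (x : EuclideanSpace ℝ (Fin m)) => (sphChart m i ε x : Fin (m+1) → ℝ) := by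
    apply continuous_pi
    intro j
    rcases eq_or_ne j i with rfl | hne
    · simpa only [sphChart_apply_same] using hg
    · obtain ⟨j', rfl⟩ := Fin.exists_succAbove_eq hne
      simp only [sphChart_apply_succAbove]
      exact (continuous_apply j').comp (PiLp.continuous_ofLp 2 _)
  exact (PiLp.continuous_toLp 2 _).comp this

lemma sphere_subset_charts :
    unitSphere (m+1) ⊆ ⋃ (i : Fin (m+1)) (ε ∈ ({1,-1} : Set ℝ)),
      sphChart m i ε '' closedBall 0 (chartR m) := by
  intro u hu
  have hsum := sum_sq_of_mem_sphere hu
  have hex : ∃ i : Fin (m+1), 1/((m:ℝ)+1) ≤ u i ^ 2 := by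
    by_contra hcon
    push_neg at hcon
    have : ∑ j : Fin (m+1), u j ^ 2 < ∑ _j : Fin (m+1), 1/((m:ℝ)+1) :=
      Finset.sum_lt_sum_of_nonempty ⟨0, mem_univ 0⟩ (fun j _ => hcon j)
    rw [hsum] at this
    have hcard : ∑ _j : Fin (m+1), 1/((m:ℝ)+1) = 1 := by
      simp only [Finset.sum_const, card_univ, Fintype.card_fin, nsmul_eq_mul]
      push_cast
      field_simp
    rw [hcard] at this
    exact lt_irrefl 1 this
  obtain ⟨i, hi⟩ := hex
  set ε : ℝ := if 0 ≤ u i then 1 else -1 with hεdef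
  have hε2 : ε = 1 ∨ ε = -1 := by unfold ε; split <;> simp
  have hεu : ε * |u i| = u i := by
    unfold ε; split
    · rw [abs_of_nonneg ‹_›, one_mul]
    · rw [abs_of_neg (by linarith [not_le.mp ‹¬ 0 ≤ u i›]), neg_mul, one_mul, neg_neg]
  have hmem : sphProj m i u ∈ closedBall 0 (chartR m) := by
    simp only [mem_closedBall, dist_zero_right]
    have h1 : ‖sphProj m i u‖ ^ 2 = 1 - u i ^ 2 := norm_sphProj_sq hu i
    have h2 : ‖sphProj m i u‖ ^ 2 ≤ 1 - 1/((m:ℝ)+1) := by rw [h1]; linarith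
    have h3 : chartR m ^ 2 = 1 - 1/((m:ℝ)+1) := by
      rw [chartR, Real.sq_sqrt]
      have : (0:ℝ) < (m:ℝ)+1 := by positivity
      rw [sub_nonneg, div_le_one this]; linarith
    have := Real.sqrt_le_sqrt (h2.trans_eq h3.symm)
    rwa [Real.sqrt_sq (norm_nonneg _), Real.sqrt_sq (by rw [chartR]; positivity)] at this
  refine Set.mem_iUnion.mpr ⟨i, Set.mem_iUnion.mpr ⟨ε, Set.mem_iUnion.mpr ⟨by
      rcases hε2 with h | h <;> simp [h], ⟨sphProj m i u, hmem, sphChart_sphProj hu hεu hε2⟩⟩⟩⟩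

lemma exists_chart_point {u : EuclideanSpace ℝ (Fin (m+1))} (hu : u ∈ unitSphere (m+1)) :
    ∃ (i : Fin (m+1)) (ε : ℝ), (ε = 1 ∨ ε = -1) ∧
      sphProj m i u ∈ closedBall 0 (chartR m) ∧ sphChart m i ε (sphProj m i u) = u := by
  have hsum := sum_sq_of_mem_sphere hu
  have hex : ∃ i : Fin (m+1), 1/((m:ℝ)+1) ≤ u i ^ 2 := by
    by_contra hcon
    push_neg at hcon
    have : ∑ j : Fin (m+1), u j ^ 2 < ∑ _j : Fin (m+1), 1/((m:ℝ)+1) :=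
      Finset.sum_lt_sum_of_nonempty ⟨0, mem_univ 0⟩ (fun j _ => hcon j)
    rw [hsum] at this
    have hcard : ∑ _j : Fin (m+1), 1/((m:ℝ)+1) = 1 := by
      simp only [Finset.sum_const, card_univ, Fintype.card_fin, nsmul_eq_mul]
      push_cast
      field_simp
    rw [hcard] at this
    exact lt_irrefl 1 this
  obtain ⟨i, hi⟩ := hex
  set ε : ℝ := if 0 ≤ u i then 1 else -1 with hεdef
  have hε2 : ε = 1 ∨ ε = -1 := by unfold ε; split <;> simp
  have hεu : ε * |u i| = u i := by
    unfold ε; split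
    · rw [abs_of_nonneg ‹_›, one_mul]
    · rw [abs_of_neg (by linarith [not_le.mp ‹¬ 0 ≤ u i›]), neg_mul, one_mul, neg_neg]
  have hmem : sphProj m i u ∈ closedBall 0 (chartR m) := by
    simp only [mem_closedBall, dist_zero_right]
    have h1 : ‖sphProj m i u‖ ^ 2 = 1 - u i ^ 2 := norm_sphProj_sq hu i
    have h2 : ‖sphProj m i u‖ ^ 2 ≤ 1 - 1/((m:ℝ)+1) := by rw [h1]; linarith
    have h3 : chartR m ^ 2 = 1 - 1/((m:ℝ)+1) := by
      rw [chartR, Real.sq_sqrt]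
      have : (0:ℝ) < (m:ℝ)+1 := by positivity
      rw [sub_nonneg, div_le_one this]; linarith
    have := Real.sqrt_le_sqrt (h2.trans_eq h3.symm)
    rwa [Real.sqrt_sq (norm_nonneg _), Real.sqrt_sq (by rw [chartR]; positivity)] at this
  exact ⟨i, ε, hε2, hmem, sphChart_sphProj hu hεu hε2⟩

lemma sphere_subset_charts' :
    unitSphere (m+1) ⊆ ⋃ (i : Fin (m+1)) (ε ∈ ({1,-1} : Set ℝ)),
      sphChart m i ε '' closedBall 0 (chartR m) := by
  intro u hu
  obtain ⟨i, ε, hε2, hmem, heq⟩ := exists_chart_point hu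
  exact Set.mem_iUnion.mpr ⟨i, Set.mem_iUnion.mpr ⟨ε, Set.mem_iUnion.mpr ⟨by
      rcases hε2 with h | h <;> simp [h], ⟨sphProj m i u, hmem, heq⟩⟩⟩⟩

lemma haar_compact_lt_top {C : Set (EuclideanSpace ℝ (Fin m))} (hC : IsCompact C) :
    μH[(m:ℝ)] C < ⊤ := by
  have hfr : ((Module.finrank ℝ (EuclideanSpace ℝ (Fin m)) : ℕ) : ℝ) = (m:ℝ) := by
    rw [finrank_euclideanSpace_fin]
  rw [← hfr]
  exact hC.measure_lt_top

lemma haar_open_pos {U : Set (EuclideanSpace ℝ (Fin m))} (hU : IsOpen U) (hne : U.Nonempty) :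
    0 < μH[(m:ℝ)] U := by
  have hfr : ((Module.finrank ℝ (EuclideanSpace ℝ (Fin m)) : ℕ) : ℝ) = (m:ℝ) := by
    rw [finrank_euclideanSpace_fin]
  rw [← hfr]
  exact hU.measure_pos _ hne

lemma chart_image_lt_top (i : Fin (m+1)) {ε : ℝ} (hε : ε = 1 ∨ ε = -1) :
    μH[(m:ℝ)] (sphChart m i ε '' closedBall 0 (chartR m)) < ⊤ := by
  apply lt_of_le_of_lt ((lipschitzOnWith_sphChart i hε).hausdorffMeasure_image_le
    (by positivity : (0:ℝ) ≤ (m:ℝ)))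
  apply ENNReal.mul_lt_top
  · exact ENNReal.rpow_lt_top_of_nonneg (by positivity) ENNReal.coe_ne_top
  · exact haar_compact_lt_top (isCompact_closedBall 0 _)

lemma sphere_hausdorff_lt_top : μH[(m:ℝ)] (unitSphere (m+1)) < ⊤ := by
  apply lt_of_le_of_lt (measure_mono (sphere_subset_charts' (m := m)))
  apply lt_of_le_of_lt (measure_iUnion_le _)
  rw [tsum_fintype]
  apply ENNReal.sum_lt_top.mpr
  intro i _
  have : (⋃ ε ∈ ({1,-1} : Set ℝ), sphChart m i ε '' closedBall 0 (chartR m))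
      = (sphChart m i 1 '' closedBall 0 (chartR m)) ∪
        (sphChart m i (-1) '' closedBall 0 (chartR m)) := by
    rw [Set.biUnion_pair]
  rw [this]
  apply lt_of_le_of_lt (measure_union_le _ _)
  exact ENNReal.add_lt_top.mpr ⟨chart_image_lt_top i (Or.inl rfl), chart_image_lt_top i (Or.inr rfl)⟩

lemma sphere_hausdorff_ball_pos {u : EuclideanSpace ℝ (Fin (m+1))}
    (hu : u ∈ unitSphere (m+1)) {δ : ℝ} (hδ : 0 < δ) :
    0 < μH[(m:ℝ)] (unitSphere (m+1) ∩ ball u δ) := by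
  obtain ⟨i, ε, hε2, hmem, heq⟩ := exists_chart_point hu
  set x₀ := sphProj m i u with hx₀
  have hx₀n : ‖x₀‖ < 1 := by
    have := mem_closedBall.mp hmem
    rw [dist_zero_right] at this
    exact lt_of_le_of_lt this chartR_lt_one
  obtain ⟨ρ, hρ, hρball⟩ := Metric.continuousAt_iff.mp (continuous_sphChart i ε).continuousAt δ hδ
  set ρ' : ℝ := min ρ (1 - ‖x₀‖) with hρ'def
  have hρ' : 0 < ρ' := lt_min hρ (by linarith)
  have himg : sphChart m i ε '' ball x₀ ρ' ⊆ unitSphere (m+1) ∩ ball u δ := by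
    rintro _ ⟨x, hx, rfl⟩
    rw [mem_ball] at hx
    constructor
    · apply sphChart_mem_sphere i hε2
      have h1 : ‖x‖ ≤ dist x x₀ + ‖x₀‖ := by
        calc ‖x‖ = dist x 0 := (dist_zero_right x).symm
          _ ≤ dist x x₀ + dist x₀ 0 := dist_triangle _ _ _
          _ = dist x x₀ + ‖x₀‖ := by rw [dist_zero_right]
      have h2 : dist x x₀ < 1 - ‖x₀‖ := lt_of_lt_of_le hx (min_le_right _ _)
      linarith
    · rw [mem_ball, ← heq]
      exact hρball (lt_of_lt_of_le hx (min_le_left _ _))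
  have hproj : sphProj m i '' (sphChart m i ε '' ball x₀ ρ') = ball x₀ ρ' := by
    rw [Set.image_image]
    have : ∀ x, sphProj m i (sphChart m i ε x) = x := fun x => sphProj_sphChart i ε x
    simp only [this, Set.image_id']
  have h1 : 0 < μH[(m:ℝ)] (ball x₀ ρ') := haar_open_pos isOpen_ball ⟨x₀, mem_ball_self hρ'⟩
  have h2 : μH[(m:ℝ)] (ball x₀ ρ') ≤ μH[(m:ℝ)] (sphChart m i ε '' ball x₀ ρ') := by
    have h3 := (lipschitzWith_sphProj (m := m) i).hausdorffMeasure_image_le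
      (by positivity : (0:ℝ) ≤ (m:ℝ)) (sphChart m i ε '' ball x₀ ρ')
    rw [hproj] at h3
    simpa using h3
  exact lt_of_lt_of_le (lt_of_lt_of_le h1 h2) (measure_mono himg)

end Charts

section IntegrationLayer
variable {m : ℕ}

lemma continuousOn_finset_prod' {ι α : Type*} [TopologicalSpace α] (s : Finset ι)
    (f : ι → α → ℝ) (t : Set α) (h : ∀ i ∈ s, ContinuousOn (f i) t) :
    ContinuousOn (fun x => ∏ i ∈ s, f i x) t := by
  classical
  induction s using Finset.cons_induction with
  | empty => simpa using continuousOn_const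
  | cons a s ha ih =>
    simp only [Finset.prod_cons]
    exact (h a (mem_cons_self a s)).mul (ih fun i hi => h i (mem_cons.mpr (Or.inr hi)))

lemma measurableSet_unitSphere : MeasurableSet (unitSphere (m+1)) :=
  (isClosed_sphere).measurableSet

lemma isCompact_unitSphere : IsCompact (unitSphere (m+1)) :=
  isCompact_sphere 0 1

lemma nonempty_unitSphere : (unitSphere (m+1)).Nonempty := by
  refine ⟨EuclideanSpace.single 0 1, ?_⟩
  simp [unitSphere, EuclideanSpace.norm_single]

instance : IsFiniteMeasure ((μH[(m:ℝ)] : Measure (EuclideanSpace ℝ (Fin (m+1)))).restrict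
    (unitSphere (m+1))) := by
  constructor
  rw [Measure.restrict_apply_univ]
  exact sphere_hausdorff_lt_top

lemma sphere_meas_pos : 0 < μH[(m:ℝ)] (unitSphere (m+1)) := by
  obtain ⟨u, hu⟩ := nonempty_unitSphere (m := m)
  exact lt_of_lt_of_le (sphere_hausdorff_ball_pos hu one_pos)
    (measure_mono Set.inter_subset_left)

lemma integrableOn_sphere {f : EuclideanSpace ℝ (Fin (m+1)) → ℝ}
    (hf : ContinuousOn f (unitSphere (m+1))) :
    IntegrableOn f (unitSphere (m+1)) μH[(m:ℝ)] := by
  obtain ⟨C, hC⟩ := (isCompact_unitSphere (m := m)).exists_bound_of_continuousOn hf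
  refine Integrable.mono' (integrable_const C)
    (hf.aestronglyMeasurable measurableSet_unitSphere) ?_
  exact (ae_restrict_iff' measurableSet_unitSphere).mpr (Filter.Eventually.of_forall hC)

lemma sphere_integral_pos {f : EuclideanSpace ℝ (Fin (m+1)) → ℝ}
    (hf : ContinuousOn f (unitSphere (m+1))) (hpos : ∀ u ∈ unitSphere (m+1), 0 < f u) :
    0 < ∫ u in unitSphere (m+1), f u ∂μH[(m:ℝ)] := by
  obtain ⟨z, hz, hmin⟩ := (isCompact_unitSphere (m := m)).exists_isMinOn
    nonempty_unitSphere hf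
  have hminle : ∀ y ∈ unitSphere (m+1), f z ≤ f y := fun y hy => hmin hy
  have hfz : 0 < f z := hpos z hz
  have h1 : ∫ u in unitSphere (m+1), (f z : ℝ) ∂μH[(m:ℝ)]
      ≤ ∫ u in unitSphere (m+1), f u ∂μH[(m:ℝ)] := by
    apply setIntegral_mono_on
    · exact integrableOn_const sphere_hausdorff_lt_top.ne
    · exact integrableOn_sphere hf
    · exact measurableSet_unitSphere
    · exact hminle
  rw [setIntegral_const, smul_eq_mul] at h1
  have h2 : 0 < (μH[(m:ℝ)]).real (unitSphere (m+1)) :=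
    ENNReal.toReal_pos (sphere_meas_pos).ne' sphere_hausdorff_lt_top.ne
  nlinarith

lemma sphere_vanish {h : EuclideanSpace ℝ (Fin (m+1)) → ℝ}
    (hc : ContinuousOn h (unitSphere (m+1))) (hnn : ∀ u ∈ unitSphere (m+1), 0 ≤ h u)
    (hz : ∫ u in unitSphere (m+1), h u ∂μH[(m:ℝ)] = 0) :
    ∀ u ∈ unitSphere (m+1), h u = 0 := by
  have hint := integrableOn_sphere hc
  have hae : h =ᵐ[(μH[(m:ℝ)] : Measure (EuclideanSpace ℝ (Fin (m+1)))).restrict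
      (unitSphere (m+1))] 0 := by
    rw [← integral_eq_zero_iff_of_nonneg_ae _ hint]
    · exact hz
    · exact (ae_restrict_iff' measurableSet_unitSphere).mpr
        (Filter.Eventually.of_forall hnn)
  intro u hu
  by_contra hne
  have hupos : 0 < h u := lt_of_le_of_ne (hnn u hu) (Ne.symm hne)
  obtain ⟨δ, hδ, hδball⟩ := Metric.continuousWithinAt_iff.mp (hc u hu) (h u / 2) (by linarith)
  have hsub : unitSphere (m+1) ∩ ball u δ ⊆ {x | h x ≠ 0} ∩ unitSphere (m+1) := by
    rintro y ⟨hyS, hyb⟩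
    have := hδball hyS (mem_ball.mp hyb)
    rw [Real.dist_eq] at this
    have hy2 : h y > h u / 2 := by cases abs_lt.mp this; linarith
    have : h y ≠ 0 := ne_of_gt (by linarith)
    exact ⟨this, hyS⟩
  have h0 : μH[(m:ℝ)] ({x | h x ≠ 0} ∩ unitSphere (m+1)) = 0 := by
    have hm := hae
    rw [Filter.EventuallyEq, ae_iff] at hm
    rw [← Measure.restrict_apply' measurableSet_unitSphere]
    simpa using hm
  have := lt_of_lt_of_le (sphere_hausdorff_ball_pos hu hδ) (measure_mono hsub)
  rw [h0] at this
  exact lt_irrefl 0 this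

end IntegrationLayer

section AMGM

lemma pow_cancel {a b : ℝ} (ha : 0 ≤ a) (hb : 0 ≤ b) {k : ℕ} (hk : k ≠ 0)
    (h : a ^ k = b ^ k) : a = b := by
  rcases lt_trichotomy a b with hlt | heq | hgt
  · have := pow_lt_pow_left₀ hlt ha hk; rw [h] at this; exact absurd this (lt_irrefl _)
  · exact heq
  · have := pow_lt_pow_left₀ hgt hb hk; rw [h] at this; exact absurd this (lt_irrefl _)

lemma amgm_le {ι : Type*} (t : Finset ι) (ht : t.Nonempty) (z : ι → ℝ)
    (hz : ∀ i ∈ t, 0 < z i) :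
    (∏ i ∈ t, z i ≤ ((∑ i ∈ t, z i) / t.card) ^ t.card) ∧
    (∏ i ∈ t, z i = ((∑ i ∈ t, z i) / t.card) ^ t.card →
      ∀ i ∈ t, ∀ j ∈ t, z i = z j) := by
  classical
  have hcard : 0 < (t.card : ℝ) := by exact_mod_cast Finset.card_pos.mpr ht
  set w : ι → ℝ := fun _ => 1 / t.card with hw
  have hw0 : ∀ i ∈ t, 0 < w i := fun i _ => by positivity
  have hw1 : ∑ i ∈ t, w i = 1 := by
    rw [Finset.sum_const, nsmul_eq_mul]
    field_simp
  set p : ι → ℝ := fun i => Real.log (z i) with hp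
  set A : ℝ := Real.exp (∑ i ∈ t, w i • p i) with hA
  set B : ℝ := ∑ i ∈ t, w i • Real.exp (p i) with hB
  have hAB : A ≤ B := convexOn_exp.map_sum_le (fun i hi => (hw0 i hi).le) hw1
    (fun i _ => Set.mem_univ _)
  have hApos : 0 < A := Real.exp_pos _
  have hexp : ∀ i ∈ t, Real.exp (p i) = z i := fun i hi => Real.exp_log (hz i hi)
  have hBeq : B = (∑ i ∈ t, z i) / t.card := by
    rw [hB, Finset.sum_div]
    apply Finset.sum_congr rfl
    intro i hi
    rw [smul_eq_mul, hexp i hi, hw]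
    ring
  have hAcard : A ^ t.card = ∏ i ∈ t, z i := by
    rw [hA, ← Real.exp_nat_mul, Finset.mul_sum]
    have : ∀ i ∈ t, (t.card : ℝ) * (w i • p i) = p i := by
      intro i hi
      rw [smul_eq_mul, hw]
      field_simp
    rw [Finset.sum_congr rfl this, Real.exp_sum]
    exact Finset.prod_congr rfl hexp
  have hBpos : 0 < B := lt_of_lt_of_le hApos hAB
  constructor
  · rw [← hAcard, ← hBeq]
    exact pow_le_pow_left₀ hApos.le hAB t.card
  · intro heq i hi j hj
    rw [← hAcard, ← hBeq] at heq
    have hABeq : A = B := pow_cancel hApos.le hBpos.le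
      (Finset.card_pos.mpr ht).ne' heq
    have hle : ∑ i ∈ t, w i • Real.exp (p i) ≤ Real.exp (∑ i ∈ t, w i • p i) := by
      rw [← hB, ← hA, hABeq]
    have := strictConvexOn_exp.eq_of_le_map_sum hw0 hw1 (fun i _ => Set.mem_univ _) hle hi hj
    calc z i = Real.exp (p i) := (hexp i hi).symm
      _ = Real.exp (p j) := by rw [this]
      _ = z j := hexp j hj

end AMGM

lemma card_filter_fin_lt {n r : ℕ} (hr : r ≤ n) :
    (Finset.univ.filter (fun j : Fin n => (j : ℕ) < r)).card = r := by
  have : Finset.univ.filter (fun j : Fin n => (j : ℕ) < r)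
      = Finset.map (Fin.castLEEmb hr) Finset.univ := by
    ext j
    simp only [mem_filter, mem_univ, true_and, mem_map, Fin.castLEEmb]
    constructor
    · intro h
      exact ⟨⟨(j : ℕ), h⟩, by ext; simp⟩
    · rintro ⟨k, rfl⟩
      simpa using k.isLt
  rw [this, Finset.card_map, Finset.card_univ, Fintype.card_fin]


lemma continuousOn_finset_sum' {ι α : Type*} [TopologicalSpace α] (s : Finset ι)
    (f : ι → α → ℝ) (t : Set α) (h : ∀ i ∈ s, ContinuousOn (f i) t) :
    ContinuousOn (fun x => ∑ i ∈ s, f i x) t := by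
  classical
  induction s using Finset.cons_induction with
  | empty => simpa using continuousOn_const
  | cons a s ha ih =>
    simp only [Finset.sum_cons]
    exact (h a (mem_cons_self a s)).add (ih fun i hi => h i (mem_cons.mpr (Or.inr hi)))


/-- **Lemma B** (dual Aleksandrov–Fenchel inequality for dual mixed volumes).
If `K₁, …, Kₙ` are star bodies in `ℝⁿ` and `1 ≤ r ≤ n`, then
`Ṽ(K₁,…,Kₙ)^r ≤ ∏_{j=1}^r Ṽ(K_j,…,K_j,K_{r+1},…,Kₙ)`, with equality iff
`K₁, …, K_r` are all dilations of each other. -/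
theorem dualMixedVol_alexandrov_fenchel (n : ℕ) (hn : 3 ≤ n)
    (K : Fin n → EuclideanSpace ℝ (Fin n) → ℝ) (hK : ∀ k, IsStarBody n (K k))
    (r : ℕ) (hr1 : 1 ≤ r) (hr2 : r ≤ n) :
    dualMixedVol n K ^ r ≤
      (∏ j ∈ Finset.univ.filter (fun j : Fin n => (j : ℕ) < r),
        dualMixedVol n (fun k => if (k : ℕ) < r then K j else K k)) ∧
    (dualMixedVol n K ^ r =
      (∏ j ∈ Finset.univ.filter (fun j : Fin n => (j : ℕ) < r),
        dualMixedVol n (fun k => if (k : ℕ) < r then K j else K k)) ↔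
      ∀ j j' : Fin n, (j : ℕ) < r → (j' : ℕ) < r → Dilates n (K j) (K j')) := by
  classical
  obtain ⟨m, rfl⟩ : ∃ m, n = m + 1 := ⟨n - 1, by omega⟩
  set S := unitSphere (m+1) with hS
  have hmeas : (μH[((m+1 : ℕ) : ℝ) - 1] :
      Measure (EuclideanSpace ℝ (Fin (m+1)))) = μH[(m:ℝ)] := by
    congr 1
    push_cast
    ring
  set μ : Measure (EuclideanSpace ℝ (Fin (m+1))) := μH[(m:ℝ)] with hμ
  set c0 : ℝ := 1 / ((m+1 : ℕ) : ℝ) with hc0def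
  have hc0 : 0 < c0 := by rw [hc0def]; positivity
  have hrpos : (0:ℝ) < (r:ℝ) := by exact_mod_cast hr1
  have hr0 : (r : ℝ) ≠ 0 := hrpos.ne'
  have hrne : r ≠ 0 := by omega
  set t : Finset (Fin (m+1)) := Finset.univ.filter (fun j : Fin (m+1) => (j : ℕ) < r) with ht
  have htcard : t.card = r := card_filter_fin_lt hr2
  have htne : t.Nonempty := Finset.card_pos.mp (by rw [htcard]; omega)
  have htmem : ∀ j : Fin (m+1), j ∈ t ↔ (j : ℕ) < r := by
    intro j; rw [ht, mem_filter]; simp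
  have hKc : ∀ k, ContinuousOn (K k) S := fun k => (hK k).1
  have hKp : ∀ k, ∀ u ∈ S, 0 < K k u := fun k => (hK k).2
  set g : EuclideanSpace ℝ (Fin (m+1)) → ℝ := fun u => ∏ k ∈ tᶜ, K k u with hg
  have hgcont : ContinuousOn g S := continuousOn_finset_prod' _ _ _ (fun k _ => hKc k)
  have hgpos : ∀ u ∈ S, 0 < g u := fun u hu => Finset.prod_pos (fun k _ => hKp k u hu)
  set P : EuclideanSpace ℝ (Fin (m+1)) → ℝ := fun u => ∏ k, K k u with hP
  have hPfact : ∀ u, P u = (∏ j ∈ t, K j u) * g u :=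
    fun u => (Finset.prod_mul_prod_compl t _).symm
  have hPcont : ContinuousOn P S := continuousOn_finset_prod' _ _ _ (fun k _ => hKc k)
  have hPpos : ∀ u ∈ S, 0 < P u := fun u hu => Finset.prod_pos (fun k _ => hKp k u hu)
  set I : Fin (m+1) → ℝ := fun j => ∫ u in S, (K j u) ^ r * g u ∂μ with hI
  have hQcont : ∀ j, ContinuousOn (fun u => (K j u) ^ r * g u) S :=
    fun j => ((hKc j).pow r).mul hgcont
  have hQpos : ∀ j, ∀ u ∈ S, 0 < (K j u) ^ r * g u :=
    fun j u hu => mul_pos (pow_pos (hKp j u hu) r) (hgpos u hu)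
  have hIpos : ∀ j, 0 < I j := fun j => sphere_integral_pos (hQcont j) (hQpos j)
  set J : ℝ := ∫ u in S, P u ∂μ with hJ
  have hJpos : 0 < J := sphere_integral_pos hPcont hPpos
  -- rewriting dualMixedVol
  have hDMV : ∀ Kfam : Fin (m+1) → EuclideanSpace ℝ (Fin (m+1)) → ℝ,
      dualMixedVol (m+1) Kfam = c0 * ∫ u in S, (∏ k, Kfam k u) ∂μ := by
    intro Kfam
    rw [dualMixedVol, hmeas]
  have hQeq : ∀ j ∈ t, ∀ u, (∏ k : Fin (m+1), (if (k : ℕ) < r then K j else K k) u)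
      = (K j u) ^ r * g u := by
    intro j _ u
    rw [← Finset.prod_mul_prod_compl t]
    congr 1
    · rw [Finset.prod_congr rfl (fun k hk => by rw [if_pos ((htmem k).mp hk)]),
        Finset.prod_const, htcard]
    · refine Finset.prod_congr rfl (fun k hk => ?_)
      rw [if_neg]
      intro hcon
      exact (Finset.mem_compl.mp hk) ((htmem k).mpr hcon)
  have hRHSj : ∀ j ∈ t, dualMixedVol (m+1) (fun k => if (k : ℕ) < r then K j else K k)
      = c0 * I j := by
    intro j hj
    rw [hDMV]
    congr 1
    exact integral_congr_ae (Filter.Eventually.of_forall (fun u => hQeq j hj u))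
  have hRHS : (∏ j ∈ t, dualMixedVol (m+1) (fun k => if (k : ℕ) < r then K j else K k))
      = c0 ^ r * ∏ j ∈ t, I j := by
    rw [Finset.prod_congr rfl hRHSj, Finset.prod_mul_distrib, Finset.prod_const, htcard]
  have hLHS : dualMixedVol (m+1) K = c0 * J := hDMV K
  -- the normalized sum
  set φ : EuclideanSpace ℝ (Fin (m+1)) → ℝ :=
    fun u => (∑ j ∈ t, (K j u) ^ r * g u / I j) / r with hφ
  have hφcont : ContinuousOn φ S := by
    apply ContinuousOn.div_const
    exact continuousOn_finset_sum' _ _ _ (fun j _ => (hQcont j).div_const _)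
  have hφpos : ∀ u ∈ S, 0 < φ u := by
    intro u hu
    apply div_pos _ hrpos
    exact Finset.sum_pos (fun j hj => div_pos (hQpos j u hu) (hIpos j)) htne
  have hφint : ∫ u in S, φ u ∂μ = 1 := by
    simp only [hφ]
    have hQint : ∀ j ∈ t, IntegrableOn (fun u => (K j u) ^ r * g u / I j) S μ :=
      fun j _ => (integrableOn_sphere (hQcont j)).div_const _
    rw [integral_div, integral_finset_sum t hQint]
    have hone : ∀ j ∈ t, ∫ u in S, (K j u) ^ r * g u / I j ∂μ = 1 := by
      intro j _
      rw [integral_div]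
      have : (∫ u in S, (K j u) ^ r * g u ∂μ) = I j := rfl
      rw [this, div_self (hIpos j).ne']
    rw [Finset.sum_congr rfl hone, Finset.sum_const, htcard, nsmul_eq_mul, mul_one,
      div_self hr0]
  -- the constant c
  set c : ℝ := (∏ j ∈ t, I j) ^ ((r : ℝ)⁻¹) with hc
  have hprodIpos : 0 < ∏ j ∈ t, I j := Finset.prod_pos (fun j _ => hIpos j)
  have hcpos : 0 < c := Real.rpow_pos_of_pos hprodIpos _
  have hcr : c ^ r = ∏ j ∈ t, I j := by
    rw [hc, ← Real.rpow_natCast ((∏ j ∈ t, I j) ^ ((r : ℝ)⁻¹)) r,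
      ← Real.rpow_mul hprodIpos.le, inv_mul_cancel₀ hr0, Real.rpow_one]
  -- pointwise facts
  have hzprod : ∀ u, (∏ j ∈ t, (K j u) ^ r * g u / I j)
      = P u ^ r / ∏ j ∈ t, I j := by
    intro u
    rw [Finset.prod_div_distrib]
    congr 1
    rw [Finset.prod_mul_distrib, Finset.prod_pow, Finset.prod_const, htcard, ← mul_pow,
      ← hPfact u]
  have hzsum : ∀ u, ((∑ j ∈ t, (K j u) ^ r * g u / I j) / (t.card : ℝ)) = φ u := by
    intro u
    simp only [hφ]
    rw [htcard]
  have hamgm := fun (u : EuclideanSpace ℝ (Fin (m+1))) (hu : u ∈ S) =>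
    amgm_le t htne (fun j => (K j u) ^ r * g u / I j)
      (fun j _ => div_pos (hQpos j u hu) (hIpos j))
  have hpt : ∀ u ∈ S, P u ≤ c * φ u := by
    intro u hu
    have h1 := (hamgm u hu).1
    rw [hzprod u, hzsum u, htcard] at h1
    rw [div_le_iff₀ hprodIpos] at h1
    have h3 : φ u ^ r * (∏ j ∈ t, I j) = (c * φ u) ^ r := by
      rw [mul_pow, hcr]; ring
    rw [h3] at h1
    exact le_of_pow_le_pow_left₀ hrne (mul_nonneg hcpos.le (hφpos u hu).le) h1
  -- integrate the pointwise bound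
  have hPint : IntegrableOn P S μ := integrableOn_sphere hPcont
  have hφI : IntegrableOn φ S μ := integrableOn_sphere hφcont
  have hJle : J ≤ c := by
    have hm := setIntegral_mono_on hPint (hφI.const_mul c) measurableSet_unitSphere hpt
    rw [integral_const_mul, hφint, mul_one] at hm
    exact hm
  have hcore : J ^ r ≤ ∏ j ∈ t, I j := by
    rw [← hcr]
    exact pow_le_pow_left₀ hJpos.le hJle r
  refine ⟨?_, ?_, ?_⟩
  · rw [hLHS, hRHS, mul_pow]
    exact mul_le_mul_of_nonneg_left hcore (by positivity)
  · -- equality implies dilation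
    intro hEq
    rw [hLHS, hRHS, mul_pow] at hEq
    have hJr : J ^ r = ∏ j ∈ t, I j :=
      mul_left_cancel₀ (pow_ne_zero r hc0.ne') hEq
    have hJc : J = c := pow_cancel hJpos.le hcpos.le hrne (by rw [hJr, hcr])
    have hvanish : ∀ u ∈ S, c * φ u - P u = 0 := by
      apply sphere_vanish ((continuousOn_const.mul hφcont).sub hPcont)
      · intro u hu
        have := hpt u hu
        show 0 ≤ c * φ u - P u
        linarith
      · have : ∫ u in S, (c * φ u - P u) ∂μ = 0 := by
          rw [integral_sub (hφI.const_mul c) hPint, integral_const_mul, hφint, mul_one,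
            ← hJ, hJc, sub_self]
        exact this
    have hzeq : ∀ u ∈ S, ∀ j ∈ t, ∀ j' ∈ t,
        (K j u) ^ r * g u / I j = (K j' u) ^ r * g u / I j' := by
      intro u hu
      apply (hamgm u hu).2
      have hPu : P u = c * φ u := by have := hvanish u hu; linarith
      rw [hzprod u, hzsum u, htcard, hPu, mul_pow, hcr]
      field_simp
    intro j j' hj hj'
    have hjt : j ∈ t := (htmem j).mpr hj
    have hjt' : j' ∈ t := (htmem j').mpr hj'
    set lam : ℝ := (I j' / I j) ^ ((r : ℝ)⁻¹) with hlam
    have hratio : 0 < I j' / I j := div_pos (hIpos j') (hIpos j)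
    have hlampos : 0 < lam := Real.rpow_pos_of_pos hratio _
    have hlamr : lam ^ r = I j' / I j := by
      rw [hlam, ← Real.rpow_natCast ((I j' / I j) ^ ((r : ℝ)⁻¹)) r,
        ← Real.rpow_mul hratio.le, inv_mul_cancel₀ hr0, Real.rpow_one]
    refine ⟨lam, hlampos, ?_⟩
    intro u hu
    have heq := hzeq u hu j hjt j' hjt'
    have hgne : g u ≠ 0 := (hgpos u hu).ne'
    rw [div_eq_div_iff (hIpos j).ne' (hIpos j').ne'] at heq
    have key : K j' u ^ r * I j = I j' * K j u ^ r := by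
      have h2 : g u * (K j' u ^ r * I j) = g u * (I j' * K j u ^ r) := by
        linear_combination -heq
      exact mul_left_cancel₀ hgne h2
    have hKr : (K j' u) ^ r = (lam * K j u) ^ r := by
      rw [mul_pow, hlamr, div_mul_eq_mul_div, eq_div_iff (hIpos j).ne']
      exact key
    exact pow_cancel (hKp j' u hu).le
      (mul_nonneg hlampos.le (hKp j u hu).le) hrne hKr
  · -- dilation implies equality
    intro hdil
    have hj₀r : ((⟨0, by omega⟩ : Fin (m+1)) : ℕ) < r := by show 0 < r; omega
    set j₀ : Fin (m+1) := ⟨0, by omega⟩ with hj₀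
    set lam : Fin (m+1) → ℝ := fun j =>
      if h : (j : ℕ) < r then (hdil j₀ j hj₀r h).choose else 1 with hlam
    have hlampos : ∀ j ∈ t, 0 < lam j := by
      intro j hj
      simp only [hlam]
      rw [dif_pos ((htmem j).mp hj)]
      exact (hdil j₀ j hj₀r ((htmem j).mp hj)).choose_spec.1
    have hlameq : ∀ j ∈ t, ∀ u ∈ S, K j u = lam j * K j₀ u := by
      intro j hj u hu
      simp only [hlam]
      rw [dif_pos ((htmem j).mp hj)]
      exact (hdil j₀ j hj₀r ((htmem j).mp hj)).choose_spec.2 u hu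
    set L : ℝ := ∏ j ∈ t, lam j with hL
    have hPS : ∀ u ∈ S, P u = L * ((K j₀ u) ^ r * g u) := by
      intro u hu
      rw [hPfact u, Finset.prod_congr rfl (fun j hj => hlameq j hj u hu),
        Finset.prod_mul_distrib, Finset.prod_const, htcard]
      ring
    have hJL : J = L * I j₀ := by
      rw [hJ, setIntegral_congr_fun measurableSet_unitSphere hPS, integral_const_mul]
    have hIeq : ∀ j ∈ t, I j = lam j ^ r * I j₀ := by
      intro j hj
      have hpw : ∀ u ∈ S, (K j u) ^ r * g u = lam j ^ r * ((K j₀ u) ^ r * g u) := by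
        intro u hu
        rw [hlameq j hj u hu, mul_pow]
        ring
      have : I j = ∫ u in S, lam j ^ r * ((K j₀ u) ^ r * g u) ∂μ :=
        setIntegral_congr_fun measurableSet_unitSphere hpw
      rw [this, integral_const_mul]
    have hprod : ∏ j ∈ t, I j = J ^ r := by
      rw [Finset.prod_congr rfl hIeq, Finset.prod_mul_distrib, Finset.prod_const, htcard,
        Finset.prod_pow, ← hL, hJL, mul_pow]
    rw [hLHS, hRHS, hprod, mul_pow]
end
end

section
/- Let K, L, L₁, …, L_{n-2} be star bodies in ℝⁿ, let i be an integer with 0 ≤ i ≤ n-1, and let α be real with 0 ≤ α ≤ 1. Writing I(Q, M) for the mixed intersection body I(Q, L₁,…,L_{n-2}), one has W̃_i(I(K +̃ L, M))^{1/(n-i)} ≤ W̃_i(I(α·K +̃ (1-α)·L, M))^{1/(n-i)} + W̃_i(I((1-α)·K +̃ α·L, M))^{1/(n-i)}. -/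
open MeasureTheory Metric Finset
open scoped NNReal ENNReal

noncomputable section

section AuxLemmas
open Set
open scoped NNReal ENNReal RealInnerProductSpace

lemma lipschitzOnWith_normalize {E : Type*} [NormedAddCommGroup E] [NormedSpace ℝ E] :
    LipschitzOnWith 2 (fun x : E => ‖x‖⁻¹ • x) {x : E | 1 ≤ ‖x‖} := by
  rw [lipschitzOnWith_iff_dist_le_mul]
  intro x hx y hy
  simp only [Set.mem_setOf_eq] at hx hy
  have hx0 : (0:ℝ) < ‖x‖ := lt_of_lt_of_le one_pos hx
  have hy0 : (0:ℝ) < ‖y‖ := lt_of_lt_of_le one_pos hy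
  rw [dist_eq_norm, dist_eq_norm]
  have key : ‖x‖⁻¹ • x - ‖y‖⁻¹ • y = ‖x‖⁻¹ • (x - y) + (‖x‖⁻¹ - ‖y‖⁻¹) • y := by
    rw [smul_sub, sub_smul]; abel
  rw [key]
  have h1 : ‖‖x‖⁻¹ • (x - y)‖ ≤ ‖x - y‖ := by
    rw [norm_smul, norm_inv, norm_norm]
    calc ‖x‖⁻¹ * ‖x - y‖ ≤ 1 * ‖x - y‖ := by
          apply mul_le_mul_of_nonneg_right _ (norm_nonneg _)
          rw [inv_le_one_iff₀]; right; exact hx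
      _ = ‖x - y‖ := one_mul _
  have h2 : ‖(‖x‖⁻¹ - ‖y‖⁻¹) • y‖ ≤ ‖x - y‖ := by
    rw [norm_smul, Real.norm_eq_abs]
    have : |‖x‖⁻¹ - ‖y‖⁻¹| = |‖y‖ - ‖x‖| / (‖x‖ * ‖y‖) := by
      rw [eq_div_iff (by positivity : (‖x‖ * ‖y‖) ≠ (0:ℝ))]
      rw [← abs_of_pos (show (0:ℝ) < ‖x‖ * ‖y‖ by positivity), ← abs_mul]
      congr 1
      field_simp
    rw [this, div_mul_eq_mul_div]
    calc |‖y‖ - ‖x‖| * ‖y‖ / (‖x‖ * ‖y‖) = |‖y‖ - ‖x‖| / ‖x‖ := by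
          field_simp
      _ ≤ ‖x - y‖ / 1 := by
          apply div_le_div₀ (norm_nonneg _) _ one_pos hx
          rw [abs_sub_comm]
          exact (abs_norm_sub_norm_le x y).trans (le_refl _)
      _ = ‖x - y‖ := div_one _
  calc ‖‖x‖⁻¹ • (x - y) + (‖x‖⁻¹ - ‖y‖⁻¹) • y‖ ≤ ‖‖x‖⁻¹ • (x - y)‖ + ‖(‖x‖⁻¹ - ‖y‖⁻¹) • y‖ :=
        norm_add_le _ _
    _ ≤ ‖x - y‖ + ‖x - y‖ := add_le_add h1 h2
    _ = 2 * ‖x - y‖ := by ring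

lemma sphere_hm_lt_top (m : ℕ) :
    μH[(m:ℝ)] (Metric.sphere (0 : EuclideanSpace ℝ (Fin (m+1))) 1) < ⊤ := by
  classical
  set d := m + 1 with hd
  set Q : Set (Fin m → ℝ) := Set.Icc (fun _ => (-1:ℝ)) (fun _ => 1) with hQdef
  have hQc : IsCompact Q := isCompact_Icc
  set π : EuclideanSpace ℝ (Fin d) → EuclideanSpace ℝ (Fin d) := fun x => ‖x‖⁻¹ • x with hπ
  set g : Fin d → ℝ → (Fin m → ℝ) → EuclideanSpace ℝ (Fin d) :=
    fun j σ y => WithLp.toLp 2 (Fin.insertNth j σ y : Fin d → ℝ) with hg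
  -- coordinatewise bound for g differences
  have hglip : ∀ (j : Fin d) (σ : ℝ), LipschitzWith (d : ℝ≥0) (g j σ) := by
    intro j σ
    apply LipschitzWith.of_dist_le_mul
    intro y y'
    have hb : ∀ i : Fin d, dist (g j σ y i) (g j σ y' i) ≤ dist y y' := by
      intro i
      rcases eq_or_ne i j with rfl | hne
      · simp only [hg, PiLp.toLp_apply, Fin.insertNth_apply_same, dist_self]
        exact dist_nonneg
      · obtain ⟨k, rfl⟩ := Fin.exists_succAbove_eq hne
        simp only [hg, PiLp.toLp_apply, Fin.insertNth_apply_succAbove]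
        exact dist_le_pi_dist y y' k
    have h1 : dist (g j σ y) (g j σ y') ≤ Real.sqrt (∑ i : Fin d, dist y y' ^ 2) := by
      rw [EuclideanSpace.dist_eq]
      apply Real.sqrt_le_sqrt
      apply Finset.sum_le_sum
      intro i _
      exact pow_le_pow_left₀ dist_nonneg (hb i) 2
    refine h1.trans ?_
    rw [Finset.sum_const, Finset.card_univ, Fintype.card_fin]
    rw [nsmul_eq_mul]
    rw [Real.sqrt_mul (by positivity), Real.sqrt_sq dist_nonneg]
    apply mul_le_mul_of_nonneg_right _ dist_nonneg
    have h1d : (1:ℝ) ≤ d := by exact_mod_cast Nat.one_le_iff_ne_zero.mpr (by omega)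
    calc Real.sqrt d ≤ Real.sqrt ((d:ℝ)^2) := Real.sqrt_le_sqrt (by nlinarith)
      _ = (d:ℝ) := Real.sqrt_sq (by positivity)
      _ = ((d : ℝ≥0) : ℝ) := by simp
  have hgmaps : ∀ (j : Fin d) (σ : ℝ), |σ| = 1 →
      Set.MapsTo (g j σ) Q {x : EuclideanSpace ℝ (Fin d) | 1 ≤ ‖x‖} := by
    intro j σ hσ y _
    have h1 : |σ| ≤ ‖g j σ y‖ := by
      rw [EuclideanSpace.norm_eq]
      have h2 : |σ| = Real.sqrt (‖g j σ y j‖ ^ 2) := by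
        rw [Real.sqrt_sq_eq_abs, abs_norm]
        simp [hg, Fin.insertNth_apply_same, Real.norm_eq_abs]
      rw [h2]
      apply Real.sqrt_le_sqrt
      exact Finset.single_le_sum (f := fun i => ‖g j σ y i‖ ^ 2)
        (fun i _ => by positivity) (Finset.mem_univ j)
    rw [hσ] at h1
    exact h1
  set F : Fin d × Bool → (Fin m → ℝ) → EuclideanSpace ℝ (Fin d) :=
    fun p => π ∘ g p.1 (if p.2 then 1 else -1) with hF
  have hcover : Metric.sphere (0 : EuclideanSpace ℝ (Fin d)) 1 ⊆ ⋃ p : Fin d × Bool, F p '' Q := by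
    intro u hu
    have hnu : ‖u‖ = 1 := mem_sphere_zero_iff_norm.mp hu
    obtain ⟨j, -, hj⟩ := Finset.exists_max_image Finset.univ (fun i => |u i|)
      ⟨(⟨0, by omega⟩ : Fin d), Finset.mem_univ _⟩
    simp only [Finset.mem_univ, forall_true_left] at hj
    set t := |u j| with ht_def
    have ht : 0 < t := by
      rcases lt_or_ge 0 t with h | h
      · exact h
      · exfalso
        have hu0 : u = 0 := by
          ext i
          have := hj i
          have : |u i| ≤ 0 := le_trans (hj i) h
          simpa using abs_nonpos_iff.mp this
        rw [hu0] at hnu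
        simp at hnu
    set σ : ℝ := if 0 < u j then 1 else -1 with hσ_def
    have hσt : σ * t = u j := by
      by_cases h : 0 < u j
      · simp [hσ_def, if_pos h, ht_def, abs_of_pos h]
      · push_neg at h
        simp [hσ_def, if_neg (not_lt.mpr h), ht_def, abs_of_nonpos h]
    have habsσ : |σ| = 1 := by
      by_cases h : 0 < u j <;> simp [hσ_def, h]
    refine Set.mem_iUnion.mpr ⟨⟨j, decide (0 < u j)⟩, ?_⟩
    have hifσ : (if (decide (0 < u j) : Bool) then (1:ℝ) else -1) = σ := by
      by_cases h : 0 < u j <;> simp [h, hσ_def]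
    refine ⟨fun k => t⁻¹ * u (j.succAbove k), ?_, ?_⟩
    · rw [hQdef]
      rw [Set.mem_Icc]
      constructor <;> intro k
      · have : |t⁻¹ * u (j.succAbove k)| ≤ 1 := by
          rw [abs_mul, abs_inv, abs_abs]
          rw [← ht_def]
          calc t⁻¹ * |u (j.succAbove k)| ≤ t⁻¹ * t :=
                mul_le_mul_of_nonneg_left (hj _) (by positivity)
            _ = 1 := inv_mul_cancel₀ ht.ne'
        linarith [(abs_le.mp this).1]
      · have : |t⁻¹ * u (j.succAbove k)| ≤ 1 := by
          rw [abs_mul, abs_inv, abs_abs]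
          rw [← ht_def]
          calc t⁻¹ * |u (j.succAbove k)| ≤ t⁻¹ * t :=
                mul_le_mul_of_nonneg_left (hj _) (by positivity)
            _ = 1 := inv_mul_cancel₀ ht.ne'
        linarith [(abs_le.mp this).2]
    · show π (g j _ (fun k => t⁻¹ * u (j.succAbove k))) = u
      rw [hifσ]
      have hx : g j σ (fun k => t⁻¹ * u (j.succAbove k)) = t⁻¹ • u := by
        ext i
        rcases eq_or_ne i j with rfl | hne
        · simp only [hg, Fin.insertNth_apply_same, PiLp.smul_apply, smul_eq_mul]
          rw [← hσt]
          field_simp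
        · obtain ⟨k, rfl⟩ := Fin.exists_succAbove_eq hne
          simp [hg, Fin.insertNth_apply_succAbove]
      rw [hx, hπ]
      have hnx : ‖t⁻¹ • u‖ = t⁻¹ := by
        rw [norm_smul, hnu, Real.norm_eq_abs, abs_inv, abs_abs, mul_one]
      show ‖t⁻¹ • u‖⁻¹ • (t⁻¹ • u) = u
      rw [hnx, inv_inv, smul_smul, mul_inv_cancel₀ ht.ne', one_smul]
  have hQm : μH[(m:ℝ)] Q < ⊤ := by
    have hpi : (μH[(m:ℝ)] : Measure (Fin m → ℝ)) = volume := by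
      have := MeasureTheory.hausdorffMeasure_pi_real (ι := Fin m)
      simpa using this
    rw [hpi]
    exact hQc.measure_lt_top
  have him : ∀ p : Fin d × Bool,
      μH[(m:ℝ)] (F p '' Q) ≤ ((2 * d : ℝ≥0) : ℝ≥0∞) ^ (m:ℝ) * μH[(m:ℝ)] Q := by
    intro p
    have habsσ : |if p.2 then (1:ℝ) else -1| = 1 := by rcases p.2 <;> simp
    have hlip : LipschitzOnWith (2 * d) (F p) Q :=
      lipschitzOnWith_normalize.comp ((hglip p.1 _).lipschitzOnWith (s := Q)) (hgmaps p.1 _ habsσ)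
    exact hlip.hausdorffMeasure_image_le (by positivity)
  calc μH[(m:ℝ)] (Metric.sphere (0 : EuclideanSpace ℝ (Fin d)) 1)
      ≤ μH[(m:ℝ)] (⋃ p : Fin d × Bool, F p '' Q) := measure_mono hcover
    _ ≤ ∑' p : Fin d × Bool, μH[(m:ℝ)] (F p '' Q) := measure_iUnion_le _
    _ ≤ ∑' _p : Fin d × Bool, ((2 * d : ℝ≥0) : ℝ≥0∞) ^ (m:ℝ) * μH[(m:ℝ)] Q :=
        ENNReal.tsum_le_tsum him
    _ < ⊤ := by
        rw [tsum_fintype]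
        apply ENNReal.sum_lt_top.mpr
        intro a _
        exact ENNReal.mul_lt_top (ENNReal.rpow_lt_top_of_nonneg (by positivity)
          ENNReal.coe_ne_top) hQm

section HreflSection

variable {E : Type*} [NormedAddCommGroup E] [InnerProductSpace ℝ E]

/-- Reflection across the hyperplane orthogonal to `z`. -/
def Hrefl (z w : E) : E := w - (2 * ⟪z, w⟫ / ‖z‖ ^ 2) • z

lemma Hrefl_sub (z x y : E) : Hrefl z x - Hrefl z y = Hrefl z (x - y) := by
  simp only [Hrefl, inner_sub_right]
  rw [show 2 * (⟪z, x⟫ - ⟪z, y⟫) / ‖z‖ ^ 2 = 2 * ⟪z, x⟫ / ‖z‖ ^ 2 - 2 * ⟪z, y⟫ / ‖z‖ ^ 2 by ring,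
    sub_smul]
  abel

lemma norm_Hrefl (z : E) (hz : z ≠ 0) (w : E) : ‖Hrefl z w‖ = ‖w‖ := by
  have hz' : ‖z‖ ≠ 0 := norm_ne_zero_iff.mpr hz
  have hsq : ‖Hrefl z w‖ ^ 2 = ‖w‖ ^ 2 := by
    rw [Hrefl, @norm_sub_sq_real, real_inner_smul_right, norm_smul, mul_pow]
    rw [Real.norm_eq_abs, sq_abs, real_inner_comm w z]
    field_simp
    ring
  calc ‖Hrefl z w‖ = Real.sqrt (‖Hrefl z w‖ ^ 2) := (Real.sqrt_sq (norm_nonneg _)).symm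
    _ = Real.sqrt (‖w‖ ^ 2) := by rw [hsq]
    _ = ‖w‖ := Real.sqrt_sq (norm_nonneg _)

lemma inner_Hrefl (z a b : E) : ⟪a, Hrefl z b⟫ = ⟪Hrefl z a, b⟫ := by
  simp only [Hrefl, inner_sub_right, inner_sub_left, real_inner_smul_right, real_inner_smul_left]
  rw [real_inner_comm a z]
  ring

lemma Hrefl_invol (z : E) (hz : z ≠ 0) (w : E) : Hrefl z (Hrefl z w) = w := by
  have hz' : ‖z‖ ≠ 0 := norm_ne_zero_iff.mpr hz
  have h1 : ⟪z, Hrefl z w⟫ = -⟪z, w⟫ := by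
    rw [Hrefl, inner_sub_right, real_inner_smul_right, real_inner_self_eq_norm_sq]
    field_simp
    ring
  rw [Hrefl, h1]  -- outer Hrefl applied to (Hrefl z w)
  rw [show Hrefl z w = w - (2 * ⟪z, w⟫ / ‖z‖ ^ 2) • z from rfl]
  rw [show 2 * -⟪z, w⟫ / ‖z‖ ^ 2 = -(2 * ⟪z, w⟫ / ‖z‖ ^ 2) by ring, neg_smul]
  abel

lemma isometry_Hrefl (z : E) (hz : z ≠ 0) : Isometry (Hrefl z) := by
  apply Isometry.of_dist_eq
  intro x y
  rw [dist_eq_norm, dist_eq_norm, Hrefl_sub, norm_Hrefl z hz]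

lemma Hrefl_add_left (u v : E) (hu : ‖u‖ = 1) (hv : ‖v‖ = 1) (huv : ⟪u, v⟫ ≠ -1) :
    Hrefl (u + v) u = -v := by
  have h1 : ⟪u + v, u⟫ = 1 + ⟪u, v⟫ := by
    rw [inner_add_left, real_inner_self_eq_norm_sq, hu, real_inner_comm]
    ring
  have h2 : ‖u + v‖ ^ 2 = 2 + 2 * ⟪u, v⟫ := by
    rw [@norm_add_sq_real, hu, hv]; ring
  have h3 : (2:ℝ) + 2 * ⟪u, v⟫ ≠ 0 := by
    intro h; apply huv; linarith
  rw [Hrefl, h1, h2]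
  rw [show 2 * (1 + ⟪u, v⟫) / (2 + 2 * ⟪u, v⟫) = 1 by rw [div_eq_one_iff_eq h3]; ring]
  rw [one_smul]
  abel

/-- The normalized vector sum is nonzero. -/
lemma add_ne_zero_of_inner_ne_neg_one (u v : E) (hu : ‖u‖ = 1) (hv : ‖v‖ = 1)
    (huv : ⟪u, v⟫ ≠ -1) : u + v ≠ 0 := by
  intro h
  apply huv
  have : v = -u := by linear_combination (norm := abel) h
  rw [this, inner_neg_right, real_inner_self_eq_norm_sq, hu]
  norm_num

end HreflSection

section SliceSection

variable {n : ℕ}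

/-- The slice `S^{n-1} ∩ u^⊥`. -/
def Su (n : ℕ) (u : EuclideanSpace ℝ (Fin n)) : Set (EuclideanSpace ℝ (Fin n)) :=
  unitSphere n ∩ {w | ⟪u, w⟫ = (0 : ℝ)}

lemma Su_subset_sphere (u : EuclideanSpace ℝ (Fin n)) : Su n u ⊆ unitSphere n :=
  Set.inter_subset_left

lemma isClosed_Su (u : EuclideanSpace ℝ (Fin n)) : IsClosed (Su n u) := by
  apply IsClosed.inter (Metric.isClosed_sphere)
  have : {w : EuclideanSpace ℝ (Fin n) | ⟪u, w⟫ = (0:ℝ)} =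
      (fun w : EuclideanSpace ℝ (Fin n) => ⟪u, w⟫) ⁻¹' {(0:ℝ)} := rfl
  rw [this]
  exact IsClosed.preimage (Continuous.inner continuous_const continuous_id) isClosed_singleton

lemma measurableSet_Su (u : EuclideanSpace ℝ (Fin n)) : MeasurableSet (Su n u) :=
  (isClosed_Su u).measurableSet

lemma Su_eq_image {u v : EuclideanSpace ℝ (Fin n)} (hu : ‖u‖ = 1) (hv : ‖v‖ = 1)
    (huv : ⟪u, v⟫ ≠ -1) : Su n u = Hrefl (u + v) '' Su n v := by
  have hz : u + v ≠ 0 := add_ne_zero_of_inner_ne_neg_one u v hu hv huv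
  have hvu : ⟪v, u⟫ ≠ -1 := by rwa [real_inner_comm]
  have hHu : Hrefl (u + v) u = -v := Hrefl_add_left u v hu hv huv
  have hHv : Hrefl (u + v) v = -u := by
    rw [add_comm]; exact Hrefl_add_left v u hv hu hvu
  ext x
  constructor
  · rintro ⟨hx1, hx2⟩
    refine ⟨Hrefl (u + v) x, ⟨?_, ?_⟩, Hrefl_invol _ hz x⟩
    · rw [unitSphere, mem_sphere_zero_iff_norm, norm_Hrefl _ hz]
      exact mem_sphere_zero_iff_norm.mp hx1
    · show ⟪v, Hrefl (u + v) x⟫ = (0:ℝ)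
      rw [inner_Hrefl, hHv, inner_neg_left, hx2, neg_zero]
  · rintro ⟨w, ⟨hw1, hw2⟩, rfl⟩
    refine ⟨?_, ?_⟩
    · rw [unitSphere, mem_sphere_zero_iff_norm, norm_Hrefl _ hz]
      exact mem_sphere_zero_iff_norm.mp hw1
    · show ⟪u, Hrefl (u + v) w⟫ = (0:ℝ)
      rw [inner_Hrefl, hHu, inner_neg_left, hw2, neg_zero]

lemma measure_Su_single_lt_top (m : ℕ) :
    μH[((m+3:ℕ):ℝ) - 2]
      (Su (m+3) (EuclideanSpace.single (⟨m+2, by omega⟩ : Fin (m+3)) (1:ℝ))) < ⊤ := by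
  set e : EuclideanSpace ℝ (Fin (m+3)) :=
    EuclideanSpace.single (⟨m+2, by omega⟩ : Fin (m+3)) (1:ℝ) with he
  set ι : EuclideanSpace ℝ (Fin (m+2)) → EuclideanSpace ℝ (Fin (m+3)) :=
    fun y => WithLp.toLp 2 (fun i : Fin (m+3) => if h : (i:ℕ) < m+2 then y ⟨i, h⟩ else 0) with hι
  have hι_norm : ∀ y, ‖ι y‖ = ‖y‖ := by
    intro y
    rw [EuclideanSpace.norm_eq, EuclideanSpace.norm_eq]
    congr 1
    rw [Fin.sum_univ_castSucc]
    simp only [hι, PiLp.toLp_apply, Fin.coe_castSucc, Fin.is_lt, dif_pos, Fin.eta, Fin.val_last,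
      lt_irrefl, dif_neg]
    simp
  have hι_sub : ∀ y y', ι y - ι y' = ι (y - y') := by
    intro y y'
    ext i
    show ι y i - ι y' i = ι (y - y') i
    simp only [hι, PiLp.toLp_apply]
    rcases lt_or_ge (i:ℕ) (m+2) with h | h
    · rw [dif_pos h, dif_pos h, dif_pos h]; rfl
    · rw [dif_neg (not_lt.mpr h), dif_neg (not_lt.mpr h), dif_neg (not_lt.mpr h)]; simp
  have hι_iso : Isometry ι := by
    apply Isometry.of_dist_eq
    intro y y'
    rw [dist_eq_norm, dist_eq_norm, hι_sub, hι_norm]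
  have himg : Su (m+3) e = ι '' (Metric.sphere 0 1) := by
    ext w
    constructor
    · rintro ⟨hw1, hw2⟩
      have hw2' : w ⟨m+2, by omega⟩ = 0 := by
        have := hw2
        simp only [Set.mem_setOf_eq, he, EuclideanSpace.inner_single_left, map_one, one_mul]
          at this
        exact this
      refine ⟨WithLp.toLp 2 (fun k : Fin (m+2) => w ⟨k, by omega⟩), ?_, ?_⟩
      · rw [mem_sphere_zero_iff_norm]
        have : ι (WithLp.toLp 2 (fun k : Fin (m+2) => w ⟨(k:ℕ), by omega⟩)) = w := by
          ext i
          simp only [hι, PiLp.toLp_apply]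
          rcases lt_or_ge (i:ℕ) (m+2) with h | h
          · rw [dif_pos h]
          · rw [dif_neg (not_lt.mpr h)]
            have hieq : i = ⟨m+2, by omega⟩ := by
              ext
              exact le_antisymm (Nat.lt_succ_iff.mp i.isLt) h
            rw [hieq]
            exact hw2'.symm
        rw [← hι_norm, this]
        exact mem_sphere_zero_iff_norm.mp hw1
      · ext i
        simp only [hι, PiLp.toLp_apply]
        rcases lt_or_ge (i:ℕ) (m+2) with h | h
        · rw [dif_pos h]
        · rw [dif_neg (not_lt.mpr h)]
          have hieq : i = ⟨m+2, by omega⟩ := by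
            ext
            exact le_antisymm (Nat.lt_succ_iff.mp i.isLt) h
          rw [hieq]
          exact hw2'.symm
    · rintro ⟨y, hy, rfl⟩
      refine ⟨?_, ?_⟩
      · rw [unitSphere, mem_sphere_zero_iff_norm, hι_norm]
        exact mem_sphere_zero_iff_norm.mp hy
      · show ⟪e, ι y⟫ = (0:ℝ)
        rw [he, EuclideanSpace.inner_single_left]
        simp only [hι, PiLp.toLp_apply]
        rw [dif_neg (by simp)]
        simp
  have hexp : ((m+3:ℕ):ℝ) - 2 = ((m+1:ℕ):ℝ) := by push_cast; ring
  rw [hexp, himg, hι_iso.hausdorffMeasure_image (Or.inl (by positivity))]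
  exact sphere_hm_lt_top (m+1)

lemma measure_Su_lt_top (hn : 3 ≤ n) {u : EuclideanSpace ℝ (Fin n)} (hu : u ∈ unitSphere n) :
    μH[(n:ℝ) - 2] (Su n u) < ⊤ := by
  obtain ⟨m, rfl⟩ : ∃ m, n = m + 3 := ⟨n - 3, by omega⟩
  set e : EuclideanSpace ℝ (Fin (m+3)) :=
    EuclideanSpace.single (⟨m+2, by omega⟩ : Fin (m+3)) (1:ℝ) with he
  have hne : ‖e‖ = 1 := by rw [he, EuclideanSpace.norm_single]; norm_num
  have hnu : ‖u‖ = 1 := mem_sphere_zero_iff_norm.mp hu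
  by_cases h : ⟪u, e⟫ = (-1 : ℝ)
  · have hue : u = -e := by
      have h2 : ‖u + e‖ ^ 2 = 2 + 2 * ⟪u, e⟫ := by
        rw [@norm_add_sq_real, hnu, hne]; ring
      rw [h] at h2
      have h3 : u + e = 0 := by
        rw [← norm_eq_zero]
        nlinarith [norm_nonneg (u + e)]
      linear_combination (norm := abel) h3
    have hSu : Su (m+3) u = Su (m+3) e := by
      rw [hue]
      unfold Su
      congr 1
      ext w
      simp only [Set.mem_setOf_eq, inner_neg_left, neg_eq_zero]
    rw [hSu]
    exact measure_Su_single_lt_top m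
  · rw [Su_eq_image hnu hne h]
    rw [(isometry_Hrefl _ (add_ne_zero_of_inner_ne_neg_one u e hnu hne h)).hausdorffMeasure_image
      (Or.inl (by push_cast; linarith [show (0:ℝ) ≤ m by positivity]))]
    exact measure_Su_single_lt_top m

/-- The `IsometryEquiv` given by reflection. -/
def HreflIso {E : Type*} [NormedAddCommGroup E] [InnerProductSpace ℝ E] (z : E) (hz : z ≠ 0) :
    E ≃ᵢ E where
  toFun := Hrefl z
  invFun := Hrefl z
  left_inv := Hrefl_invol z hz
  right_inv := Hrefl_invol z hz
  isometry_toFun := isometry_Hrefl z hz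

lemma continuousOn_slice_integral (hn : 3 ≤ n) {G : EuclideanSpace ℝ (Fin n) → ℝ}
    (hG : ContinuousOn G (unitSphere n)) :
    ContinuousOn (fun u => ∫ w in Su n u, G w ∂ μH[(n:ℝ) - 2]) (unitSphere n) := by
  intro u₀ hu₀
  obtain ⟨C, hC⟩ := (isCompact_sphere (0 : EuclideanSpace ℝ (Fin n)) 1).exists_bound_of_continuousOn hG
  have hn₀ : ‖u₀‖ = 1 := mem_sphere_zero_iff_norm.mp hu₀
  set s' : Set (EuclideanSpace ℝ (Fin n)) := unitSphere n ∩ Metric.ball u₀ 1 with hs'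
  have hmem : ∀ u ∈ s', ‖u‖ = 1 ∧ ⟪u, u₀⟫ ≠ (-1:ℝ) := by
    rintro u ⟨hu1, hu2⟩
    have hnu : ‖u‖ = 1 := mem_sphere_zero_iff_norm.mp hu1
    refine ⟨hnu, ?_⟩
    have hdist : ‖u - u₀‖ < 1 := by
      rw [← dist_eq_norm]; exact mem_ball.mp hu2
    have hsq : ‖u - u₀‖ ^ 2 = 2 - 2 * ⟪u, u₀⟫ := by
      rw [@norm_sub_sq_real, hnu, hn₀]; ring
    intro h
    rw [h] at hsq
    nlinarith [norm_nonneg (u - u₀)]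
  have hzne : ∀ u ∈ s', u + u₀ ≠ 0 := fun u hu =>
    add_ne_zero_of_inner_ne_neg_one u u₀ (hmem u hu).1 hn₀ (hmem u hu).2
  -- finiteness of the slice measure at u₀
  haveI hfin : IsFiniteMeasure (μH[(n:ℝ) - 2].restrict (Su n u₀)) := by
    constructor
    rw [Measure.restrict_apply_univ]
    exact measure_Su_lt_top hn hu₀
  -- change of variables
  have key : ∀ u ∈ s', (∫ w in Su n u, G w ∂ μH[(n:ℝ) - 2]) =
      ∫ w in Su n u₀, G (Hrefl (u + u₀) w) ∂ μH[(n:ℝ) - 2] := by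
    intro u hu
    rw [Su_eq_image (hmem u hu).1 hn₀ (hmem u hu).2]
    exact ((HreflIso (u + u₀) (hzne u hu)).measurePreserving_hausdorffMeasure
      ((n:ℝ) - 2)).setIntegral_image_emb
      (HreflIso (u + u₀) (hzne u hu)).toHomeomorph.measurableEmbedding G (Su n u₀)
  -- membership of reflected points in the sphere
  have hrefl_mem : ∀ u ∈ s', ∀ w ∈ Su n u₀, Hrefl (u + u₀) w ∈ unitSphere n := by
    intro u hu w hw
    rw [unitSphere, mem_sphere_zero_iff_norm, norm_Hrefl _ (hzne u hu)]
    exact mem_sphere_zero_iff_norm.mp (Su_subset_sphere u₀ hw)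
  have hu₀s' : u₀ ∈ s' := ⟨hu₀, mem_ball_self one_pos⟩
  -- continuity by dominated convergence
  have hcont : ContinuousWithinAt
      (fun u => ∫ w in Su n u₀, G (Hrefl (u + u₀) w) ∂ μH[(n:ℝ) - 2]) s' u₀ := by
    apply continuousWithinAt_of_dominated (bound := fun _ => C)
    · filter_upwards [self_mem_nhdsWithin] with u hu
      apply ContinuousOn.aestronglyMeasurable _ (measurableSet_Su u₀)
      apply hG.comp _ (fun w hw => hrefl_mem u hu w hw)
      apply Continuous.continuousOn
      unfold Hrefl
      exact continuous_id.sub (Continuous.smul (Continuous.div_const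
        (continuous_const.mul (Continuous.inner continuous_const continuous_id))
        (‖u + u₀‖ ^ 2)) continuous_const)
    · filter_upwards [self_mem_nhdsWithin] with u hu
      rw [ae_restrict_iff' (measurableSet_Su u₀)]
      apply ae_of_all
      intro w hw
      exact hC _ (hrefl_mem u hu w hw)
    · exact integrable_const C
    · rw [ae_restrict_iff' (measurableSet_Su u₀)]
      apply ae_of_all
      intro w hw
      have hzero : ‖u₀ + u₀‖ ^ 2 ≠ 0 := by
        apply pow_ne_zero
        rw [norm_ne_zero_iff]
        exact hzne u₀ hu₀s'
      have hadd : Continuous (fun u : EuclideanSpace ℝ (Fin n) => u + u₀) :=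
        continuous_id.add continuous_const
      have h1 : ContinuousAt (fun u : EuclideanSpace ℝ (Fin n) => Hrefl (u + u₀) w) u₀ := by
        unfold Hrefl
        apply ContinuousAt.sub continuousAt_const
        apply ContinuousAt.fun_smul _ hadd.continuousAt
        apply ContinuousAt.div
        · exact (continuous_const.mul (Continuous.inner hadd continuous_const)).continuousAt
        · exact ((hadd.norm).pow 2).continuousAt
        · exact hzero
      have h2 : ContinuousWithinAt G (unitSphere n) (Hrefl (u₀ + u₀) w) :=
        hG _ (hrefl_mem u₀ hu₀s' w hw)
      exact ContinuousWithinAt.comp (g := G)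
        (f := fun u : EuclideanSpace ℝ (Fin n) => Hrefl (u + u₀) w)
        (t := unitSphere n) h2 h1.continuousWithinAt (fun u hu => hrefl_mem u hu w hw)
  have hΦ : ContinuousWithinAt (fun u => ∫ w in Su n u, G w ∂ μH[(n:ℝ) - 2]) s' u₀ :=
    hcont.congr key (key u₀ hu₀s')
  rw [hs'] at hΦ
  exact (continuousWithinAt_inter (Metric.ball_mem_nhds u₀ one_pos)).mp hΦ

lemma measure_unitSphere_lt_top (hn : 1 ≤ n) : μH[(n:ℝ) - 1] (unitSphere n) < ⊤ := by
  obtain ⟨m, rfl⟩ : ∃ m, n = m + 1 := ⟨n - 1, by omega⟩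
  have hexp : ((m+1:ℕ):ℝ) - 1 = ((m:ℕ):ℝ) := by push_cast; ring
  rw [show unitSphere (m+1) = Metric.sphere (0 : EuclideanSpace ℝ (Fin (m+1))) 1 from rfl, hexp]
  exact sphere_hm_lt_top m

lemma measurableSet_unitSphere_s11 : MeasurableSet (unitSphere n) :=
  Metric.isClosed_sphere.measurableSet

end SliceSection

end AuxLemmas

/-- **Inequality (2.3.2).** If `K, L, L₁, …, L_{n-2}` are star bodies in `ℝⁿ`,
`0 ≤ i ≤ n-1` and `0 ≤ α ≤ 1`, then, writing `I(Q, M)` for the mixed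
intersection body `I(Q, L₁,…,L_{n-2})` and `+̃` for radial addition,
`W̃_i(I(K +̃ L, M))^{1/(n-i)} ≤ W̃_i(I(αK +̃ (1-α)L, M))^{1/(n-i)}
  + W̃_i(I((1-α)K +̃ αL, M))^{1/(n-i)}`. -/
theorem brunn_minkowski_step (n : ℕ) (hn : 3 ≤ n)
    (ρK ρL : EuclideanSpace ℝ (Fin n) → ℝ)
    (hK : IsStarBody n ρK) (hL : IsStarBody n ρL)
    (Ls : Fin (n - 2) → EuclideanSpace ℝ (Fin n) → ℝ)
    (hLs : ∀ m, IsStarBody n (Ls m))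
    (i : ℕ) (hi : i ≤ n - 1) (α : ℝ) (hα0 : 0 ≤ α) (hα1 : α ≤ 1) :
    dualQuer n i (mixedIntRadial n
        (fun k => if h : (k : ℕ) < n - 2 then Ls ⟨(k : ℕ), h⟩
          else fun u => ρK u + ρL u)) ^ ((1 : ℝ) / ((n : ℝ) - i)) ≤
      dualQuer n i (mixedIntRadial n
        (fun k => if h : (k : ℕ) < n - 2 then Ls ⟨(k : ℕ), h⟩
          else fun u => α * ρK u + (1 - α) * ρL u)) ^ ((1 : ℝ) / ((n : ℝ) - i)) +
      dualQuer n i (mixedIntRadial n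
        (fun k => if h : (k : ℕ) < n - 2 then Ls ⟨(k : ℕ), h⟩
          else fun u => (1 - α) * ρK u + α * ρL u)) ^ ((1 : ℝ) / ((n : ℝ) - i)) := by
  classical
  have hn1 : 2 ≤ n - 1 := by omega
  have hin : i ≤ n := by omega
  -- the three tail radial functions
  set fS : EuclideanSpace ℝ (Fin n) → ℝ := fun u => ρK u + ρL u with hfS
  set fA : EuclideanSpace ℝ (Fin n) → ℝ := fun u => α * ρK u + (1 - α) * ρL u with hfA
  set fB : EuclideanSpace ℝ (Fin n) → ℝ := fun u => (1 - α) * ρK u + α * ρL u with hfB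
  -- the fixed product of the other star bodies
  set P : EuclideanSpace ℝ (Fin n) → ℝ :=
    fun w => ∏ k ∈ Finset.range (n - 2), (if h : k < n - 2 then Ls ⟨k, h⟩ w else 1) with hP
  -- splitting the product
  have hsplit : ∀ (f : EuclideanSpace ℝ (Fin n) → ℝ) (w : EuclideanSpace ℝ (Fin n)),
      (∏ k : Fin (n-1), (if h : (k:ℕ) < n - 2 then Ls ⟨(k:ℕ), h⟩ else f) w) = P w * f w := by
    intro f w
    have h1 : (∏ k : Fin (n-1), (if h : (k:ℕ) < n - 2 then Ls ⟨(k:ℕ), h⟩ else f) w)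
        = ∏ k ∈ Finset.range (n-1),
            (fun k : ℕ => if h : k < n - 2 then Ls ⟨k, h⟩ w else f w) k := by
      rw [← Fin.prod_univ_eq_prod_range]
      apply Finset.prod_congr rfl
      intro k _
      by_cases h : (k:ℕ) < n - 2 <;> simp [h]
    rw [h1]
    have h2 : n - 1 = (n - 2) + 1 := by omega
    rw [h2, Finset.prod_range_succ, dif_neg (lt_irrefl _)]
    congr 1
    apply Finset.prod_congr rfl
    intro k hk
    rw [dif_pos (Finset.mem_range.mp hk), dif_pos (Finset.mem_range.mp hk)]
  -- rewriting the mixed intersection radial functions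
  have hmix : ∀ f : EuclideanSpace ℝ (Fin n) → ℝ,
      mixedIntRadial n (fun k => if h : (k:ℕ) < n - 2 then Ls ⟨(k:ℕ), h⟩ else f)
        = fun u => (1/((n:ℝ)-1)) * ∫ w in Su n u, P w * f w ∂ μH[(n:ℝ)-2] := by
    intro f
    funext u
    unfold mixedIntRadial
    congr 1
    have hfun : (fun w => ∏ k : Fin (n-1),
        (if h : (k:ℕ) < n - 2 then Ls ⟨(k:ℕ), h⟩ else f) w) = fun w => P w * f w :=
      funext (hsplit f)
    calc (∫ w in unitSphere n ∩ {w | inner ℝ u w = (0:ℝ)},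
            ∏ k : Fin (n-1), (if h : (k:ℕ) < n - 2 then Ls ⟨(k:ℕ), h⟩ else f) w ∂ μH[(n:ℝ)-2])
        = ∫ w in Su n u, P w * f w ∂ μH[(n:ℝ)-2] := by rw [← hfun]; rfl
      _ = _ := rfl
  rw [hmix fS, hmix fA, hmix fB]
  -- properties of the building blocks
  have hPcont : ContinuousOn P (unitSphere n) := by
    apply continuousOn_finset_prod
    intro k hk
    simp only [dif_pos (Finset.mem_range.mp hk)]
    exact (hLs _).1
  have hPnonneg : ∀ w ∈ unitSphere n, 0 ≤ P w := by
    intro w hw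
    apply Finset.prod_nonneg
    intro k hk
    rw [dif_pos (Finset.mem_range.mp hk)]
    exact le_of_lt ((hLs _).2 w hw)
  have hfScont : ContinuousOn fS (unitSphere n) := hK.1.add hL.1
  have hfAcont : ContinuousOn fA (unitSphere n) :=
    (continuousOn_const.mul hK.1).add (continuousOn_const.mul hL.1)
  have hfBcont : ContinuousOn fB (unitSphere n) :=
    (continuousOn_const.mul hK.1).add (continuousOn_const.mul hL.1)
  have hfSpos : ∀ w ∈ unitSphere n, 0 ≤ fS w := fun w hw =>
    add_nonneg (le_of_lt (hK.2 w hw)) (le_of_lt (hL.2 w hw))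
  have hfApos : ∀ w ∈ unitSphere n, 0 ≤ fA w := fun w hw =>
    add_nonneg (mul_nonneg hα0 (le_of_lt (hK.2 w hw)))
      (mul_nonneg (by linarith) (le_of_lt (hL.2 w hw)))
  have hfBpos : ∀ w ∈ unitSphere n, 0 ≤ fB w := fun w hw =>
    add_nonneg (mul_nonneg (by linarith) (le_of_lt (hK.2 w hw)))
      (mul_nonneg hα0 (le_of_lt (hL.2 w hw)))
  -- abbreviations for the three radial functions of the mixed intersection bodies
  set c₁ : ℝ := 1/((n:ℝ)-1) with hc₁
  have hc₁pos : 0 ≤ c₁ := by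
    rw [hc₁]
    have : (3:ℝ) ≤ (n:ℝ) := by exact_mod_cast hn
    apply div_nonneg zero_le_one
    linarith
  set sfun : EuclideanSpace ℝ (Fin n) → ℝ :=
    fun u => c₁ * ∫ w in Su n u, P w * fS w ∂ μH[(n:ℝ)-2] with hsfun
  set afun : EuclideanSpace ℝ (Fin n) → ℝ :=
    fun u => c₁ * ∫ w in Su n u, P w * fA w ∂ μH[(n:ℝ)-2] with hafun
  set bfun : EuclideanSpace ℝ (Fin n) → ℝ :=
    fun u => c₁ * ∫ w in Su n u, P w * fB w ∂ μH[(n:ℝ)-2] with hbfun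
  -- continuity of the three radial functions
  have hcont : ∀ f : EuclideanSpace ℝ (Fin n) → ℝ, ContinuousOn f (unitSphere n) →
      ContinuousOn (fun u => c₁ * ∫ w in Su n u, P w * f w ∂ μH[(n:ℝ)-2]) (unitSphere n) :=
    fun f hf => continuousOn_const.mul (continuousOn_slice_integral hn (hPcont.mul hf))
  have hscont : ContinuousOn sfun (unitSphere n) := hcont fS hfScont
  have hacont : ContinuousOn afun (unitSphere n) := hcont fA hfAcont
  have hbcont : ContinuousOn bfun (unitSphere n) := hcont fB hfBcont
  -- nonnegativity
  have hnn : ∀ (f : EuclideanSpace ℝ (Fin n) → ℝ), (∀ w ∈ unitSphere n, 0 ≤ f w) →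
      ∀ u, 0 ≤ c₁ * ∫ w in Su n u, P w * f w ∂ μH[(n:ℝ)-2] := by
    intro f hf u
    apply mul_nonneg hc₁pos
    apply setIntegral_nonneg (measurableSet_Su u)
    intro w hw
    exact mul_nonneg (hPnonneg w (Su_subset_sphere u hw)) (hf w (Su_subset_sphere u hw))
  have hsnn : ∀ u, 0 ≤ sfun u := hnn fS hfSpos
  have hann : ∀ u, 0 ≤ afun u := hnn fA hfApos
  have hbnn : ∀ u, 0 ≤ bfun u := hnn fB hfBpos
  -- additivity on the sphere
  have hadd : ∀ u ∈ unitSphere n, sfun u = afun u + bfun u := by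
    intro u hu
    have hint : ∀ (f : EuclideanSpace ℝ (Fin n) → ℝ), ContinuousOn f (unitSphere n) →
        IntegrableOn (fun w => P w * f w) (Su n u) μH[(n:ℝ)-2] := by
      intro f hf
      have hGc : ContinuousOn (fun w => P w * f w) (unitSphere n) := hPcont.mul hf
      obtain ⟨C, hC⟩ :=
        (isCompact_sphere (0 : EuclideanSpace ℝ (Fin n)) 1).exists_bound_of_continuousOn hGc
      haveI : IsFiniteMeasure (μH[(n:ℝ)-2].restrict (Su n u)) := by
        constructor
        rw [Measure.restrict_apply_univ]
        exact measure_Su_lt_top hn hu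
      have haesm : AEStronglyMeasurable (fun w => P w * f w)
          (μH[(n:ℝ)-2].restrict (Su n u)) :=
        (hGc.mono (Su_subset_sphere u)).aestronglyMeasurable (measurableSet_Su u)
      apply Integrable.mono' (integrable_const C) haesm
      rw [ae_restrict_iff' (measurableSet_Su u)]
      exact ae_of_all _ fun w hw => hC w (Su_subset_sphere u hw)
    rw [hsfun, hafun, hbfun]
    simp only
    have h1 : (∫ w in Su n u, P w * fS w ∂ μH[(n:ℝ)-2])
        = ∫ w in Su n u, (P w * fA w + P w * fB w) ∂ μH[(n:ℝ)-2] := by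
      apply integral_congr_ae
      apply ae_of_all
      intro w
      simp only [hfS, hfA, hfB]
      ring
    rw [h1, integral_add (hint fA hfAcont) (hint fB hfBcont), mul_add]
  -- now the outer inequality
  set p : ℕ := n - i with hp
  have hp1 : 1 ≤ p := by omega
  have hpr : ((n:ℝ) - (i:ℝ)) = (p:ℝ) := by rw [hp]; push_cast [hin]; ring
  rw [hpr]
  unfold dualQuer
  haveI : IsFiniteMeasure (μH[(n:ℝ)-1].restrict (unitSphere n)) := by
    constructor
    rw [Measure.restrict_apply_univ]
    exact measure_unitSphere_lt_top (by omega)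
  have hmeasS : MeasurableSet (unitSphere n) := measurableSet_unitSphere_s11
  -- conversion of integrals
  have hconv : ∀ f : EuclideanSpace ℝ (Fin n) → ℝ, (∀ u ∈ unitSphere n, 0 ≤ f u) →
      (∫ u in unitSphere n, f u ^ p ∂ μH[(n:ℝ)-1]) =
        ∫ u in unitSphere n, ‖f u‖ ^ (p:ℝ) ∂ μH[(n:ℝ)-1] := by
    intro f hf
    apply integral_congr_ae
    apply (ae_restrict_iff' hmeasS).mpr
    apply ae_of_all
    intro u hu
    show f u ^ p = ‖f u‖ ^ (p:ℝ)
    rw [Real.norm_eq_abs, abs_of_nonneg (hf u hu), ← Real.rpow_natCast]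
  have hmeas : ∀ f : EuclideanSpace ℝ (Fin n) → ℝ, ContinuousOn f (unitSphere n) →
      AEStronglyMeasurable f (μH[(n:ℝ)-1].restrict (unitSphere n)) := fun f hf =>
    hf.aestronglyMeasurable hmeasS
  have hmemlp : ∀ f : EuclideanSpace ℝ (Fin n) → ℝ, ContinuousOn f (unitSphere n) →
      MemLp f (p : ℝ≥0∞) (μH[(n:ℝ)-1].restrict (unitSphere n)) := by
    intro f hf
    obtain ⟨C, hC⟩ :=
      (isCompact_sphere (0 : EuclideanSpace ℝ (Fin n)) 1).exists_bound_of_continuousOn hf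
    apply MemLp.of_bound (hmeas f hf) C
    rw [ae_restrict_iff' hmeasS]
    exact ae_of_all _ fun u hu => hC u hu
  have hptop : ((p : ℝ≥0∞)) ≠ ⊤ := by simp
  have hpzero : ((p : ℝ≥0∞)) ≠ 0 := by
    simp only [ne_eq, Nat.cast_eq_zero]
    omega
  have hptoReal : ((p : ℝ≥0∞)).toReal = (p:ℝ) := by simp
  -- the L^p norms
  have hlp : ∀ f : EuclideanSpace ℝ (Fin n) → ℝ, ContinuousOn f (unitSphere n) →
      eLpNorm f (p : ℝ≥0∞) (μH[(n:ℝ)-1].restrict (unitSphere n)) =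
        ENNReal.ofReal ((∫ u in unitSphere n, ‖f u‖ ^ (p:ℝ) ∂ μH[(n:ℝ)-1]) ^ (p:ℝ)⁻¹) := by
    intro f hf
    rw [(hmemlp f hf).eLpNorm_eq_integral_rpow_norm hpzero hptop, hptoReal]
  have hNnonneg : ∀ f : EuclideanSpace ℝ (Fin n) → ℝ,
      0 ≤ (∫ u in unitSphere n, ‖f u‖ ^ (p:ℝ) ∂ μH[(n:ℝ)-1]) ^ (p:ℝ)⁻¹ := by
    intro f
    apply Real.rpow_nonneg
    apply integral_nonneg
    intro u
    positivity
  -- triangle inequality for the L^p norms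
  have htri : ((∫ u in unitSphere n, ‖sfun u‖ ^ (p:ℝ) ∂ μH[(n:ℝ)-1]) ^ (p:ℝ)⁻¹ : ℝ) ≤
      (∫ u in unitSphere n, ‖afun u‖ ^ (p:ℝ) ∂ μH[(n:ℝ)-1]) ^ (p:ℝ)⁻¹
        + (∫ u in unitSphere n, ‖bfun u‖ ^ (p:ℝ) ∂ μH[(n:ℝ)-1]) ^ (p:ℝ)⁻¹ := by
    have h1 : eLpNorm sfun (p : ℝ≥0∞) (μH[(n:ℝ)-1].restrict (unitSphere n))
        = eLpNorm (afun + bfun) (p : ℝ≥0∞) (μH[(n:ℝ)-1].restrict (unitSphere n)) := by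
      apply eLpNorm_congr_ae
      apply (ae_restrict_iff' hmeasS).mpr
      exact ae_of_all _ fun u hu => by rw [Pi.add_apply]; exact hadd u hu
    have h2 : eLpNorm (afun + bfun) (p : ℝ≥0∞) (μH[(n:ℝ)-1].restrict (unitSphere n)) ≤
        eLpNorm afun (p : ℝ≥0∞) (μH[(n:ℝ)-1].restrict (unitSphere n))
          + eLpNorm bfun (p : ℝ≥0∞) (μH[(n:ℝ)-1].restrict (unitSphere n)) :=
      eLpNorm_add_le (hmeas afun hacont) (hmeas bfun hbcont) (by exact_mod_cast hp1)
    rw [hlp sfun hscont] at h1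
    rw [hlp afun hacont, hlp bfun hbcont] at h2
    rw [← ENNReal.ofReal_add (hNnonneg afun) (hNnonneg bfun)] at h2
    have h3 := le_trans (le_of_eq h1) h2
    rwa [ENNReal.ofReal_le_ofReal_iff (add_nonneg (hNnonneg afun) (hNnonneg bfun))] at h3
  -- put everything together
  rw [hconv sfun (fun u _ => hsnn u), hconv afun (fun u _ => hann u),
    hconv bfun (fun u _ => hbnn u)]
  have hcn : (0:ℝ) ≤ 1 / (n:ℝ) := by positivity
  have hintnn : ∀ f : EuclideanSpace ℝ (Fin n) → ℝ,
      0 ≤ ∫ u in unitSphere n, ‖f u‖ ^ (p:ℝ) ∂ μH[(n:ℝ)-1] := by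
    intro f
    apply integral_nonneg
    intro u
    positivity
  rw [Real.mul_rpow hcn (hintnn sfun), Real.mul_rpow hcn (hintnn afun),
    Real.mul_rpow hcn (hintnn bfun), ← mul_add]
  apply mul_le_mul_of_nonneg_left _ (Real.rpow_nonneg hcn _)
  simpa [one_div] using htri
end
end
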